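/- arXiv:2105.00054 — 7 statements merged into one kernel-verified Lean document; each statement's English description precedes it below -/
import Mathlib

section
/- Let h : [0,1] → [0,1] be strictly increasing with h(0)=0, h(1)=1, and suppose h is twice continuously differentiable at p₀ ∈ (0,1) with h'(p₀) > 0. For each small ε₁ > 0 let μ(ε₁) be the unique solution of h(p₀−ε₁) − 2h(p₀−μ) + h(p₀+ε₁) = 0. Then μ(ε₁) = −(1/2)·ε₁²·h''(p₀)/h'(p₀) + o(ε₁²) as ε₁ → 0⁺. -/
open Set Filter Asymptotics

set_option maxHeartbeats 800000 in
private lemma taylor2 {h : ℝ → ℝ} {p₀ : ℝ} (hC2 : ContDiffAt ℝ 2 h p₀) :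
    (fun t => h (p₀ + t) - h p₀ - deriv h p₀ * t - deriv (deriv h) p₀ * t ^ 2 / 2)
      =o[nhds (0:ℝ)] (fun t => t ^ 2) := by
  set a := deriv h p₀ with ha
  set b := deriv (deriv h) p₀ with hbdef
  have hd1 : ContDiffAt ℝ 1 (deriv h) p₀ := by
    have h1 : ContDiffAt ℝ 1 (fderiv ℝ h) p₀ := hC2.fderiv_right (by norm_num)
    have h2 : deriv h = fun x => fderiv ℝ h x 1 := by
      ext x; exact (fderiv_apply_one_eq_deriv).symm
    rw [h2]
    exact ((ContinuousLinearMap.apply ℝ ℝ (1:ℝ)).contDiff.of_le le_top).contDiffAt.comp _ h1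
  have hb : HasDerivAt (deriv h) b p₀ := (hd1.differentiableAt one_ne_zero).hasDerivAt
  have hev : ∀ᶠ x in nhds p₀, DifferentiableAt ℝ h x :=
    (hC2.eventually (by simp)).mono fun x hx => hx.differentiableAt two_ne_zero
  have htend : Filter.Tendsto (fun t : ℝ => p₀ + t) (nhds 0) (nhds p₀) := by
    simpa using (tendsto_const_nhds.add tendsto_id : Filter.Tendsto _ (nhds (0:ℝ)) (nhds (p₀ + 0)))
  have hψ : (fun t => deriv h (p₀ + t) - a - t * b) =o[nhds (0:ℝ)] (fun t => t) := by
    have h0 := (hasDerivAt_iff_isLittleO.mp hb).comp_tendsto htend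
    have h0' : (fun t => deriv h (p₀ + t) - deriv h p₀ - ((p₀ + t) - p₀) • b)
        =o[nhds (0:ℝ)] (fun t => (p₀ + t) - p₀) := h0
    simpa [smul_eq_mul, add_sub_cancel_left] using h0'
  rw [isLittleO_iff]; intro c hc
  rw [isLittleO_iff] at hψ
  obtain ⟨ρ₁, hρ₁, hψc⟩ := Metric.eventually_nhds_iff.mp (hψ hc)
  obtain ⟨ρ₂, hρ₂, hevd⟩ := Metric.eventually_nhds_iff.mp hev
  refine Metric.eventually_nhds_iff.2 ⟨min ρ₁ ρ₂, lt_min hρ₁ hρ₂, fun t ht => ?_⟩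
  rw [Real.dist_eq, sub_zero] at ht
  have key : ∀ s ∈ uIcc (0:ℝ) t,
      HasDerivWithinAt (fun u => h (p₀ + u) - h p₀ - a * u - b * u ^ 2 / 2)
        (deriv h (p₀ + s) - a - s * b) (uIcc 0 t) s := by
    intro s hs
    have hst : |s| ≤ |t| := by
      rw [Set.mem_uIcc] at hs
      rcases hs with ⟨h1, h2⟩ | ⟨h1, h2⟩ <;> rw [abs_le] <;>
        constructor <;> linarith [le_abs_self t, neg_abs_le t]
    have hdiff : DifferentiableAt ℝ h (p₀ + s) := by
      apply hevd
      rw [Real.dist_eq]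
      have : p₀ + s - p₀ = s := by ring
      rw [this]
      exact lt_of_le_of_lt hst (lt_of_lt_of_le ht (min_le_right _ _))
    have H1 : HasDerivAt (fun u => h (p₀ + u)) (deriv h (p₀ + s)) s := by
      have := (hdiff.hasDerivAt).comp s ((hasDerivAt_id s).const_add p₀)
      rw [mul_one] at this
      exact this
    have h2 : HasDerivAt (fun u : ℝ => a * u) a s := by
      simpa using (hasDerivAt_id s).const_mul a
    have h3 : HasDerivAt (fun u : ℝ => b * u ^ 2 / 2) (s * b) s := by
      have := ((hasDerivAt_pow 2 s).const_mul b).div_const 2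
      exact this.congr_deriv (by simp; ring)
    exact (((H1.sub_const (h p₀)).sub h2).sub h3).hasDerivWithinAt
  have hbound : ∀ s ∈ uIcc (0:ℝ) t, ‖deriv h (p₀ + s) - a - s * b‖ ≤ c * |t| := by
    intro s hs
    have hst : |s| ≤ |t| := by
      rw [Set.mem_uIcc] at hs
      rcases hs with ⟨h1, h2⟩ | ⟨h1, h2⟩ <;> rw [abs_le] <;>
        constructor <;> linarith [le_abs_self t, neg_abs_le t]
    have hψs := hψc (y := s) (by
      rw [Real.dist_eq, sub_zero]
      exact lt_of_le_of_lt hst (lt_of_lt_of_le ht (min_le_left _ _)))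
    calc ‖deriv h (p₀ + s) - a - s * b‖ ≤ c * ‖s‖ := hψs
      _ ≤ c * |t| := by
          rw [Real.norm_eq_abs]
          exact mul_le_mul_of_nonneg_left hst hc.le
  have hmvt := Convex.norm_image_sub_le_of_norm_hasDerivWithin_le key hbound
    (convex_uIcc (0:ℝ) t) Set.left_mem_uIcc Set.right_mem_uIcc
  simp only [sub_zero] at hmvt
  have h00 : h (p₀ + 0) - h p₀ - a * 0 - b * 0 ^ 2 / 2 = 0 := by simp
  rw [h00, sub_zero] at hmvt
  calc ‖h (p₀ + t) - h p₀ - a * t - b * t ^ 2 / 2‖ ≤ c * |t| * ‖t‖ := hmvt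
    _ = c * ‖t ^ 2‖ := by
        rw [Real.norm_eq_abs, Real.norm_eq_abs, abs_pow]
        ring

set_option maxHeartbeats 1600000 in
theorem stmt_1 (h : ℝ → ℝ)
    (hmono : StrictMonoOn h (Icc 0 1))
    (hmaps : MapsTo h (Icc 0 1) (Icc 0 1))
    (h0 : h 0 = 0) (h1 : h 1 = 1)
    (p₀ : ℝ) (hp₀ : p₀ ∈ Ioo (0:ℝ) 1)
    (hC2 : ContDiffAt ℝ 2 h p₀)
    (hd : 0 < deriv h p₀)
    (μ : ℝ → ℝ) (δ : ℝ) (hδ : 0 < δ)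
    (hμbd : ∀ ε₁ ∈ Ioo (0:ℝ) δ, μ ε₁ ∈ Icc (-ε₁) ε₁)
    (hμeq : ∀ ε₁ ∈ Ioo (0:ℝ) δ,
      h (p₀ - ε₁) - 2 * h (p₀ - μ ε₁) + h (p₀ + ε₁) = 0) :
    (fun ε₁ => μ ε₁ - (-(1/2) * ε₁^2 * deriv (deriv h) p₀ / deriv h p₀))
      =o[nhdsWithin 0 (Ioi 0)] (fun ε₁ => ε₁^2) := by
  set a := deriv h p₀ with hadef
  set b := deriv (deriv h) p₀ with hbdef
  set R : ℝ → ℝ := fun t => h (p₀ + t) - h p₀ - a * t - b * t ^ 2 / 2 with hRdef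
  have hR : (fun t => R t) =o[nhds (0:ℝ)] (fun t => t ^ 2) := taylor2 hC2
  have hb2 : (0:ℝ) < |b| + 2 := by positivity
  set K : ℝ := (|b| + 2) / a with hKdef
  have hK : 0 < K := by positivity
  -- η = 1 bound
  obtain ⟨ρ, hρ, hRρ⟩ : ∃ ρ > 0, ∀ t : ℝ, |t| < ρ → |R t| ≤ t ^ 2 := by
    rw [isLittleO_iff] at hR
    obtain ⟨ρ, hρ, hh⟩ := Metric.eventually_nhds_iff.mp (hR one_pos)
    refine ⟨ρ, hρ, fun t ht => ?_⟩
    have := hh (y := t) (by rwa [Real.dist_eq, sub_zero])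
    simpa [abs_pow, sq_abs] using this
  rw [isLittleO_iff]
  intro c hc
  set c' : ℝ := c * a / 2 with hc'def
  have hc' : 0 < c' := by positivity
  obtain ⟨ρc, hρc, hRρc⟩ : ∃ ρc > 0, ∀ t : ℝ, |t| < ρc → |R t| ≤ c' * t ^ 2 := by
    rw [isLittleO_iff] at hR
    obtain ⟨ρc, hρc, hh⟩ := Metric.eventually_nhds_iff.mp (hR hc')
    refine ⟨ρc, hρc, fun t ht => ?_⟩
    have := hh (y := t) (by rwa [Real.dist_eq, sub_zero])
    simpa [abs_pow, sq_abs] using this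
  set r : ℝ := min δ (min ρ (min ρc (a / (|b| + 2)))) with hrdef
  have hr : 0 < r := by
    refine lt_min hδ (lt_min hρ (lt_min hρc (by positivity)))
  have hIoo : Ioo (0:ℝ) r ∈ nhdsWithin (0:ℝ) (Ioi 0) :=
    Ioo_mem_nhdsGT_of_mem ⟨le_refl 0, hr⟩
  -- eventual smallness for the ε⁴ term
  have htend : Filter.Tendsto (fun ε : ℝ => (|b| + 2) * K ^ 2 * ε ^ 2)
      (nhdsWithin (0:ℝ) (Ioi 0)) (nhds 0) := by
    have : Filter.Tendsto (fun ε : ℝ => (|b| + 2) * K ^ 2 * ε ^ 2) (nhds (0:ℝ)) (nhds 0) := by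
      have := ((continuous_pow 2).const_smul ((|b| + 2) * K ^ 2)).tendsto (0:ℝ)
      simpa [Pi.smul_def, smul_eq_mul] using this
    exact this.mono_left nhdsWithin_le_nhds
  have hsmall : ∀ᶠ ε in nhdsWithin (0:ℝ) (Ioi 0), (|b| + 2) * K ^ 2 * ε ^ 2 ≤ a * c := by
    have := htend (Iio_mem_nhds (show (0:ℝ) < a * c by positivity))
    filter_upwards [this] with ε hε
    exact le_of_lt hε
  filter_upwards [hIoo, hsmall] with ε hεIoo hεsmall
  obtain ⟨hε0, hεr⟩ := hεIoo
  have hεδ : ε < δ := lt_of_lt_of_le hεr (min_le_left _ _)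
  have hερ : ε < ρ := lt_of_lt_of_le hεr (le_trans (min_le_right _ _) (min_le_left _ _))
  have hερc : ε < ρc := lt_of_lt_of_le hεr
    (le_trans (min_le_right _ _) (le_trans (min_le_right _ _) (min_le_left _ _)))
  have hεa : (|b| + 2) * ε ≤ a := by
    have : ε ≤ a / (|b| + 2) := le_of_lt (lt_of_lt_of_le hεr
      (le_trans (min_le_right _ _) (le_trans (min_le_right _ _) (min_le_right _ _))))
    calc (|b| + 2) * ε ≤ (|b| + 2) * (a / (|b| + 2)) := by
          exact mul_le_mul_of_nonneg_left this hb2.le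
      _ = a := by field_simp
  have hμm := hμbd ε ⟨hε0, hεδ⟩
  set m : ℝ := |μ ε| with hmdef
  have hmε : m ≤ ε := abs_le.2 ⟨hμm.1, hμm.2⟩
  have hm0 : 0 ≤ m := abs_nonneg _
  have hμm1 : -m ≤ μ ε := neg_abs_le _
  have hμm2 : μ ε ≤ m := le_abs_self _
  have hμsq : (μ ε) ^ 2 = m ^ 2 := (sq_abs _).symm
  -- R bounds
  have hRμ : |R (-(μ ε))| ≤ m ^ 2 := by
    have := hRρ (-(μ ε)) (by rw [abs_neg]; exact lt_of_le_of_lt hmε hερ)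
    rw [neg_sq, hμsq] at this
    exact this
  have hRe1 : |R ε| ≤ ε ^ 2 := hRρ ε (by rw [abs_of_pos hε0]; exact hερ)
  have hRe2 : |R (-ε)| ≤ ε ^ 2 := by
    have := hRρ (-ε) (by rw [abs_neg, abs_of_pos hε0]; exact hερ)
    simpa [neg_sq] using this
  have hRe1c : |R ε| ≤ c' * ε ^ 2 := hRρc ε (by rw [abs_of_pos hε0]; exact hερc)
  have hRe2c : |R (-ε)| ≤ c' * ε ^ 2 := by
    have := hRρc (-ε) (by rw [abs_neg, abs_of_pos hε0]; exact hερc)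
    simpa using this
  -- key algebraic identity
  have heq := hμeq ε ⟨hε0, hεδ⟩
  have e1 : h (p₀ - ε) = h p₀ - a * ε + b * ε ^ 2 / 2 + R (-ε) := by
    have : R (-ε) = h (p₀ + -ε) - h p₀ - a * (-ε) - b * (-ε) ^ 2 / 2 := rfl
    have h2 : p₀ + -ε = p₀ - ε := by ring
    rw [h2, neg_sq] at this
    linarith only [this]
  have e2 : h (p₀ + ε) = h p₀ + a * ε + b * ε ^ 2 / 2 + R ε := by
    have : R ε = h (p₀ + ε) - h p₀ - a * ε - b * ε ^ 2 / 2 := rfl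
    linarith only [this]
  have e3 : h (p₀ - μ ε) = h p₀ - a * μ ε + b * (μ ε) ^ 2 / 2 + R (-(μ ε)) := by
    have : R (-(μ ε)) = h (p₀ + -(μ ε)) - h p₀ - a * (-(μ ε)) - b * (-(μ ε)) ^ 2 / 2 := rfl
    have h2 : p₀ + -(μ ε) = p₀ - μ ε := by ring
    rw [h2, neg_sq] at this
    linarith only [this]
  have key : 2 * a * μ ε = b * (μ ε) ^ 2 + 2 * R (-(μ ε)) - b * ε ^ 2 - R (-ε) - R ε := by
    rw [e1, e2, e3] at heq
    linear_combination heq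
  -- abs unpacking
  have hb1 : b * (μ ε) ^ 2 ≤ |b| * m ^ 2 := by
    rw [← hμsq]
    exact mul_le_mul_of_nonneg_right (le_abs_self b) (sq_nonneg (μ ε))
  have hb1' : -(|b| * m ^ 2) ≤ b * (μ ε) ^ 2 := by
    rw [← hμsq]
    have := mul_le_mul_of_nonneg_right (neg_abs_le b) (sq_nonneg (μ ε))
    linarith only [this]
  have hb3 : b * ε ^ 2 ≤ |b| * ε ^ 2 :=
    mul_le_mul_of_nonneg_right (le_abs_self b) (sq_nonneg ε)
  have hb3' : -(|b| * ε ^ 2) ≤ b * ε ^ 2 := by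
    have := mul_le_mul_of_nonneg_right (neg_abs_le b) (sq_nonneg ε)
    linarith only [this]
  have hRμ1 := abs_le.1 hRμ
  have hRe1' := abs_le.1 hRe1
  have hRe2' := abs_le.1 hRe2
  have hRe1c' := abs_le.1 hRe1c
  have hRe2c' := abs_le.1 hRe2c
  -- bootstrap: m ≤ K * ε²
  have H : 2 * a * m ≤ (|b| + 2) * m ^ 2 + (|b| + 2) * ε ^ 2 := by
    have habs : |2 * a * μ ε| ≤ (|b| + 2) * m ^ 2 + (|b| + 2) * ε ^ 2 := by
      rw [key, abs_le]
      constructor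
      · linarith only [hb1, hb1', hb3, hb3', hRμ1.1, hRμ1.2, hRe1'.1, hRe1'.2,
          hRe2'.1, hRe2'.2]
      · linarith only [hb1, hb1', hb3, hb3', hRμ1.1, hRμ1.2, hRe1'.1, hRe1'.2,
          hRe2'.1, hRe2'.2]
    have h2am : |2 * a * μ ε| = 2 * a * m := by
      rw [abs_mul, abs_of_pos (by positivity : (0:ℝ) < 2 * a)]
    linarith only [h2am ▸ habs]
  have hmsq : m ^ 2 ≤ ε * m := by
    rw [sq]; exact mul_le_mul_of_nonneg_right hmε hm0
  have ham : a * m ≤ (|b| + 2) * ε ^ 2 := by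
    have p1 : (|b| + 2) * m ^ 2 ≤ (|b| + 2) * (ε * m) :=
      mul_le_mul_of_nonneg_left hmsq hb2.le
    have p2 : ((|b| + 2) * ε) * m ≤ a * m := mul_le_mul_of_nonneg_right hεa hm0
    linarith only [H, p1, p2]
  have hμK : m ≤ K * ε ^ 2 := by
    rw [hKdef, div_mul_eq_mul_div, le_div_iff₀ hd]
    linarith only [ham]
  -- final bound
  have hmsq2 : m ^ 2 ≤ (K * ε ^ 2) ^ 2 := by
    rw [sq, sq]; exact mul_self_le_mul_self hm0 hμK
  have hfinal : |2 * a * (μ ε - (-(1/2) * ε ^ 2 * b / a))| ≤ 2 * a * (c * ε ^ 2) := by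
    have ha' : a ≠ 0 := ne_of_gt hd
    have hid0 : 2 * a * (μ ε - (-(1/2) * ε ^ 2 * b / a)) = 2 * a * μ ε + b * ε ^ 2 := by
      field_simp
      ring
    have hid : 2 * a * (μ ε - (-(1/2) * ε ^ 2 * b / a)) =
        b * (μ ε) ^ 2 + 2 * R (-(μ ε)) - R (-ε) - R ε := by
      rw [hid0]
      linarith [key]
    rw [hid, abs_le]
    have hK4 : (|b| + 2) * (K * ε ^ 2) ^ 2 ≤ a * c * ε ^ 2 := by
      have h5 : (|b| + 2) * K ^ 2 * ε ^ 2 * ε ^ 2 ≤ a * c * ε ^ 2 :=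
        mul_le_mul_of_nonneg_right hεsmall (sq_nonneg ε)
      have h6 : (|b| + 2) * (K * ε ^ 2) ^ 2 = (|b| + 2) * K ^ 2 * ε ^ 2 * ε ^ 2 := by ring
      linarith only [h5, h6]
    have hnum : (|b| + 2) * m ^ 2 ≤ a * c * ε ^ 2 := by
      have := mul_le_mul_of_nonneg_left hmsq2 hb2.le
      linarith only [this, hK4]
    have h2c' : 2 * (c' * ε ^ 2) = a * c * ε ^ 2 := by rw [hc'def]; ring
    constructor
    · linarith only [hnum, h2c', hb1, hb1', hRμ1.1, hRμ1.2, hRe1c'.1, hRe1c'.2,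
        hRe2c'.1, hRe2c'.2]
    · linarith only [hnum, h2c', hb1, hb1', hRμ1.1, hRμ1.2, hRe1c'.1, hRe1c'.2,
        hRe2c'.1, hRe2c'.2]
  rw [Real.norm_eq_abs, Real.norm_eq_abs, abs_pow, sq_abs]
  have h2a : |2 * a * (μ ε - (-(1/2) * ε ^ 2 * b / a))| =
      2 * a * |μ ε - (-(1/2) * ε ^ 2 * b / a)| := by
    rw [abs_mul, abs_of_pos (by positivity : (0:ℝ) < 2 * a)]
  rw [h2a] at hfinal
  have := (mul_le_mul_iff_right₀ (by positivity : (0:ℝ) < 2 * a)).1 hfinal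
  exact this
end

section
/- Let h : [0,1] → [0,1] be strictly increasing, continuous, with h(0)=0, h(1)=1, twice continuously differentiable at p₀ ∈ (0,1) with h'(p₀) > 0 and h''(p₀) < 0. Then the probability premium μ(ε₁) defined by h(p₀−ε₁) − 2h(p₀−μ) + h(p₀+ε₁) = 0 satisfies: μ is differentiable from the right at ε₁ = 0 with μ'(0⁺) = 0, and lim_{ε₁→0⁺} μ(ε₁)/ε₁² = −h''(p₀)/(2h'(p₀)) > 0. -/
set_option maxHeartbeats 1000000
open Set Filter

lemma taylor2_s2 (h : ℝ → ℝ) (p₀ a b : ℝ)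
    (hder : ∀ᶠ s in nhds p₀, DifferentiableAt ℝ h s)
    (ha : deriv h p₀ = a) (hb : HasDerivAt (deriv h) b p₀) :
    ∀ η > 0, ∀ᶠ t in nhds (0:ℝ),
      |h (p₀ + t) - h p₀ - a * t - b / 2 * t ^ 2| ≤ η * t ^ 2 := by
  intro η hη
  have hlo := (hasDerivAt_iff_isLittleO.1 hb).def hη
  rw [Metric.eventually_nhds_iff] at hder hlo ⊢
  obtain ⟨r₁, hr₁, H₁⟩ := hder
  obtain ⟨r₂, hr₂, H₂⟩ := hlo
  refine ⟨min r₁ r₂, lt_min hr₁ hr₂, fun t ht => ?_⟩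
  simp only [Real.dist_eq, sub_zero] at ht
  set g : ℝ → ℝ := fun s => h (p₀ + s) - a * s - b / 2 * s ^ 2 with hg
  have habs : ∀ s ∈ uIcc (0:ℝ) t, |s| ≤ |t| := by
    intro s hs
    rw [uIcc_eq_union] at hs
    rcases hs with ⟨h1, h2⟩ | ⟨h1, h2⟩
    · rw [abs_le]
      exact ⟨by linarith [abs_nonneg t], by linarith [le_abs_self t]⟩
    · rw [abs_le]
      exact ⟨by linarith [neg_abs_le t], by linarith [abs_nonneg t]⟩
  have hmem : ∀ s ∈ uIcc (0:ℝ) t, dist (p₀ + s) p₀ < min r₁ r₂ := by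
    intro s hs
    have := habs s hs
    rw [Real.dist_eq]; simp only [add_sub_cancel_left]
    exact lt_of_le_of_lt this ht
  have hderiv : ∀ s ∈ uIcc (0:ℝ) t,
      HasDerivWithinAt g (deriv h (p₀ + s) - a - b * s) (uIcc (0:ℝ) t) s := by
    intro s hs
    have hd1 : HasDerivAt (fun s => h (p₀ + s)) (deriv h (p₀ + s)) s :=
      ((H₁ (lt_of_lt_of_le (hmem s hs) (min_le_left _ _))).hasDerivAt).comp_const_add p₀ s
    have hd2 : HasDerivAt (fun s : ℝ => a * s) a s := by
      simpa using (hasDerivAt_id s).const_mul a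
    have hd3 : HasDerivAt (fun s : ℝ => b / 2 * s ^ 2) (b * s) s := by
      have := (hasDerivAt_pow 2 s).const_mul (b / 2)
      simpa using this.congr_deriv (by ring)
    exact ((hd1.sub hd2).sub hd3).hasDerivWithinAt
  have hbound : ∀ s ∈ uIcc (0:ℝ) t, ‖deriv h (p₀ + s) - a - b * s‖ ≤ η * |t| := by
    intro s hs
    have h2 := H₂ (lt_of_lt_of_le (hmem s hs) (min_le_right _ _))
    simp only [Real.norm_eq_abs, add_sub_cancel_left, smul_eq_mul, ha] at h2 ⊢
    calc |deriv h (p₀ + s) - a - b * s| = |deriv h (p₀ + s) - a - s * b| := by ring_nf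
      _ ≤ η * |s| := by convert h2 using 3 <;> try ring
      _ ≤ η * |t| := mul_le_mul_of_nonneg_left (habs s hs) hη.le
  have key := (convex_uIcc (0:ℝ) t).norm_image_sub_le_of_norm_hasDerivWithin_le hderiv hbound
    (left_mem_uIcc) (right_mem_uIcc)
  simp only [Real.norm_eq_abs] at key
  have h0 : g 0 = h p₀ := by simp [hg]
  calc |h (p₀ + t) - h p₀ - a * t - b / 2 * t ^ 2| = |g t - g 0| := by
        rw [h0]; congr 1; simp [hg]; ring
    _ ≤ η * |t| * |t - 0| := key
    _ = η * t ^ 2 := by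
        rw [sub_zero, mul_assoc, ← abs_mul, show t * t = t ^ 2 by ring,
          abs_of_nonneg (sq_nonneg t)]

theorem stmt_2 (h : ℝ → ℝ)
    (hmono : StrictMonoOn h (Icc 0 1))
    (hcont : ContinuousOn h (Icc 0 1))
    (hmaps : MapsTo h (Icc 0 1) (Icc 0 1))
    (h0 : h 0 = 0) (h1 : h 1 = 1)
    (p₀ : ℝ) (hp₀ : p₀ ∈ Ioo (0:ℝ) 1)
    (hC2 : ContDiffAt ℝ 2 h p₀)
    (hd : 0 < deriv h p₀) (hdd : deriv (deriv h) p₀ < 0)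
    (μ : ℝ → ℝ) (δ : ℝ) (hδ : 0 < δ)
    (hμbd : ∀ ε₁ ∈ Ioo (0:ℝ) δ, μ ε₁ ∈ Icc (-ε₁) ε₁)
    (hμeq : ∀ ε₁ ∈ Ioo (0:ℝ) δ,
      h (p₀ - ε₁) - 2 * h (p₀ - μ ε₁) + h (p₀ + ε₁) = 0) :
    Tendsto (fun ε₁ => μ ε₁ / ε₁) (nhdsWithin 0 (Ioi 0)) (nhds 0) ∧
    Tendsto (fun ε₁ => μ ε₁ / ε₁^2) (nhdsWithin 0 (Ioi 0))
      (nhds (-(deriv (deriv h) p₀) / (2 * deriv h p₀))) ∧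
    0 < -(deriv (deriv h) p₀) / (2 * deriv h p₀) := by
  set a := deriv h p₀ with ha
  set b := deriv (deriv h) p₀ with hb
  clear_value a b
  -- derive local C² structure
  obtain ⟨u, hu, hcd⟩ := hC2.contDiffOn (le_refl 2) (by norm_num)
  obtain ⟨t, hts, hto, hpt⟩ := mem_nhds_iff.1 hu
  have hcd' : ContDiffOn ℝ ((1 : WithTop ℕ∞) + 1) h t := by
    rw [show ((1 : WithTop ℕ∞) + 1) = 2 from by norm_num]
    exact hcd.mono hts
  have hsplit := (contDiffOn_succ_iff_deriv_of_isOpen hto).1 hcd'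
  have hder : ∀ᶠ s in nhds p₀, DifferentiableAt ℝ h s := by
    filter_upwards [hto.mem_nhds hpt] with s hs
    exact (hsplit.1 s hs).differentiableAt (hto.mem_nhds hs)
  have hderd : DifferentiableAt ℝ (deriv h) p₀ :=
    ((hsplit.2.2.differentiableOn (by norm_num)) p₀ hpt).differentiableAt (hto.mem_nhds hpt)
  have hbd : HasDerivAt (deriv h) b p₀ := by rw [hb]; exact hderd.hasDerivAt
  have hT := taylor2_s2 h p₀ a b hder ha.symm hbd
  have hLpos : 0 < -b / (2 * a) := div_pos (by linarith) (by linarith)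
  set C := (4 - b) / (2 * a) with hC
  have hCpos : 0 < C := div_pos (by linarith) (by linarith)
  have haC : C * (2 * a) = 4 - b := by
    rw [hC]; exact div_mul_cancel₀ _ (by linarith)
  clear_value C
  -- main limit
  have T2 : Tendsto (fun ε₁ => μ ε₁ / ε₁ ^ 2) (nhdsWithin 0 (Ioi 0)) (nhds (-b / (2 * a))) := by
    rw [Metric.tendsto_nhdsWithin_nhds]
    intro θ hθ
    set η := min 1 (a * θ / 8) with hηdef
    have hη0 : 0 < η := lt_min one_pos (by positivity)
    have hη1 : η ≤ 1 := min_le_left _ _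
    have hη2 : η ≤ a * θ / 8 := min_le_right _ _
    clear_value η
    obtain ⟨r, hr0, hr⟩ := Metric.eventually_nhds_iff.1 (hT η hη0)
    simp only [Real.dist_eq, sub_zero] at hr
    have hDpos : 0 < -b * C ^ 2 + 1 := by
      have : 0 ≤ -b * C ^ 2 := mul_nonneg (by linarith) (sq_nonneg C)
      linarith
    have hXpos : 0 < a * θ / (-b * C ^ 2 + 1) := div_pos (mul_pos hd hθ) hDpos
    set ρ := min δ (min r (Real.sqrt (a * θ / (-b * C ^ 2 + 1)))) with hρdef
    have hρ0 : 0 < ρ := lt_min hδ (lt_min hr0 (Real.sqrt_pos.2 hXpos))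
    have hρδ : ρ ≤ δ := min_le_left _ _
    have hρr : ρ ≤ r := le_trans (min_le_right _ _) (min_le_left _ _)
    have hρs : ρ ≤ Real.sqrt (a * θ / (-b * C ^ 2 + 1)) :=
      le_trans (min_le_right _ _) (min_le_right _ _)
    clear_value ρ
    refine ⟨ρ, hρ0, ?_⟩
    intro ε hε hdist
    rw [Real.dist_eq, sub_zero] at hdist
    have hε0 : 0 < ε := hε
    have hεδ : ε < δ := lt_of_lt_of_le (lt_of_abs_lt hdist) hρδ
    have hεr : ε < r := lt_of_lt_of_le (lt_of_abs_lt hdist) hρr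
    have hεX : ε ^ 2 * (-b * C ^ 2 + 1) < a * θ := by
      have h1 : ε < Real.sqrt (a * θ / (-b * C ^ 2 + 1)) :=
        lt_of_lt_of_le (lt_of_abs_lt hdist) hρs
      have h2 := (Real.lt_sqrt hε0.le).1 h1
      rw [lt_div_iff₀ hDpos] at h2
      exact h2
    obtain ⟨hm1, hm2⟩ := hμbd ε ⟨hε0, hεδ⟩
    have heqn := hμeq ε ⟨hε0, hεδ⟩
    set m := μ ε with hm
    clear_value m
    have hmabs : |m| ≤ ε := abs_le.2 ⟨hm1, hm2⟩
    have hmsq : m ^ 2 ≤ ε ^ 2 := by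
      rw [← sq_abs m]
      exact pow_le_pow_left₀ (abs_nonneg m) hmabs 2
    have hε2 : 0 < ε ^ 2 := by positivity
    -- Taylor bounds
    have hB1 : |h (p₀ + ε) - h p₀ - a * ε - b / 2 * ε ^ 2| ≤ η * ε ^ 2 :=
      hr (show |ε| < r by rw [abs_of_pos hε0]; exact hεr)
    have hB2 : |h (p₀ + -ε) - h p₀ - a * (-ε) - b / 2 * (-ε) ^ 2| ≤ η * ε ^ 2 := by
      have := hr (show |(-ε)| < r by rw [abs_neg, abs_of_pos hε0]; exact hεr)
      simpa using this
    have hB3 : |h (p₀ + -m) - h p₀ - a * (-m) - b / 2 * (-m) ^ 2| ≤ η * ε ^ 2 := by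
      have h1 := hr (show |(-m)| < r by rw [abs_neg]; exact lt_of_le_of_lt hmabs hεr)
      have h2 : η * (-m) ^ 2 ≤ η * ε ^ 2 := by
        rw [neg_sq]; exact mul_le_mul_of_nonneg_left hmsq hη0.le
      linarith only [h1, h2]
    -- the identity
    rw [show p₀ - ε = p₀ + -ε by ring, show p₀ - m = p₀ + -m by ring] at heqn
    set E1 := h (p₀ + ε) - h p₀ - a * ε - b / 2 * ε ^ 2 with hE1
    set E2 := h (p₀ + -ε) - h p₀ - a * (-ε) - b / 2 * (-ε) ^ 2 with hE2
    set E3 := h (p₀ + -m) - h p₀ - a * (-m) - b / 2 * (-m) ^ 2 with hE3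
    clear_value E1 E2 E3
    have hid : 2 * a * m + b * ε ^ 2 = b * m ^ 2 + 2 * E3 - E2 - E1 := by
      rw [hE1, hE2, hE3]; linear_combination heqn
    obtain ⟨hB1l, hB1r⟩ := abs_le.1 hB1
    obtain ⟨hB2l, hB2r⟩ := abs_le.1 hB2
    obtain ⟨hB3l, hB3r⟩ := abs_le.1 hB3
    have k0 : b * m ^ 2 ≤ 0 := mul_nonpos_of_nonpos_of_nonneg hdd.le (sq_nonneg m)
    have k0' : b * ε ^ 2 ≤ b * m ^ 2 := mul_le_mul_of_nonpos_left hmsq hdd.le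
    have kb : b * ε ^ 2 ≤ 0 := mul_nonpos_of_nonpos_of_nonneg hdd.le (sq_nonneg ε)
    have hηε : η * ε ^ 2 ≤ ε ^ 2 := mul_le_of_le_one_left hε2.le hη1
    have h2a : 0 < 2 * a := by linarith
    have up : 2 * a * m ≤ 2 * a * (C * ε ^ 2) := by
      have u1 : 2 * a * m ≤ (4 - b) * ε ^ 2 := by
        linarith only [hid, hB1l, hB2l, hB3r, k0, hηε]
      calc 2 * a * m ≤ (4 - b) * ε ^ 2 := u1
        _ = 2 * a * (C * ε ^ 2) := by rw [← haC]; ring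
    have lo : 2 * a * (-(C * ε ^ 2)) ≤ 2 * a * m := by
      have l1 : (b - 4) * ε ^ 2 ≤ 2 * a * m := by
        linarith only [hid, hB1r, hB2r, hB3l, k0', hηε, kb]
      calc 2 * a * (-(C * ε ^ 2)) = (b - 4) * ε ^ 2 := by
            rw [show (b - 4 : ℝ) = -(C * (2 * a)) by rw [haC]; ring]; ring
        _ ≤ 2 * a * m := l1
    have hmC : |m| ≤ C * ε ^ 2 :=
      abs_le.2 ⟨le_of_mul_le_mul_left lo h2a, le_of_mul_le_mul_left up h2a⟩
    have hm2' : m ^ 2 ≤ C ^ 2 * ε ^ 2 * ε ^ 2 := by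
      calc m ^ 2 ≤ (C * ε ^ 2) ^ 2 := by rw [← sq_abs m]; exact pow_le_pow_left₀ (abs_nonneg m) hmC 2
        _ = C ^ 2 * ε ^ 2 * ε ^ 2 := by ring
    have k1 : -b * C ^ 2 * ε ^ 2 < a * θ := by linarith only [hεX, hε2]
    have k2 : b * (C ^ 2 * ε ^ 2 * ε ^ 2) ≤ b * m ^ 2 :=
      mul_le_mul_of_nonpos_left hm2' hdd.le
    have k3 : -(a * θ * ε ^ 2) < b * (C ^ 2 * ε ^ 2 * ε ^ 2) := by
      have := mul_lt_mul_of_pos_right k1 hε2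
      linarith only [this]
    have k4 : 4 * (η * ε ^ 2) ≤ a * θ / 2 * ε ^ 2 := by
      have := mul_le_mul_of_nonneg_right hη2 hε2.le
      linarith only [this]
    have haθε : 0 < a * θ * ε ^ 2 := mul_pos (mul_pos hd hθ) hε2
    -- step B
    have heq2 : m / ε ^ 2 - -b / (2 * a) = (2 * a * m + b * ε ^ 2) / (2 * a * ε ^ 2) := by
      rw [div_sub_div _ _ (ne_of_gt hε2) (ne_of_gt h2a), div_eq_div_iff
        (by positivity) (by positivity)]
      ring
    rw [Real.dist_eq, heq2, abs_div,
      abs_of_pos (show (0:ℝ) < 2 * a * ε ^ 2 from mul_pos h2a hε2),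
      div_lt_iff₀ (show (0:ℝ) < 2 * a * ε ^ 2 from mul_pos h2a hε2)]
    rw [abs_lt]
    constructor
    · linarith only [hid, hB1r, hB2r, hB3l, k2, k3, k4, haθε]
    · linarith only [hid, hB1l, hB2l, hB3r, k0, k4, haθε]
  refine ⟨?_, T2, hLpos⟩
  have Tid : Tendsto (fun ε : ℝ => ε) (nhdsWithin 0 (Ioi 0)) (nhds 0) :=
    tendsto_id.mono_right nhdsWithin_le_nhds
  have := T2.mul Tid
  rw [mul_zero] at this
  refine this.congr' ?_
  filter_upwards [self_mem_nhdsWithin] with ε hε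
  have : (ε : ℝ) ≠ 0 := ne_of_gt hε
  field_simp
end

section
/- Let U be twice continuously differentiable at w₀ with U'(w₀) > 0, and h twice continuously differentiable at p₀ ∈ (0,1) with h'(p₀) > 0. Let μ(ε₁, ε₂) solve the RDU indifference equation (h(p₀+ε₁)−h(p₀−ε₁))·U(w₀) = (h(p₀−μ)−h(p₀−ε₁))·U(w₀−ε₂) + (h(p₀+ε₁)−h(p₀−μ))·U(w₀+ε₂). Then as (ε₁, ε₂) → (0⁺, 0⁺), μ = −(1/2)·ε₁·ε₂·U''(w₀)/U'(w₀) − (1/2)·ε₁²·h''(p₀)/h'(p₀) + o(ε₁ε₂) + o(ε₁²). -/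
open Set Filter Asymptotics

theorem peano_aux {f : ℝ → ℝ} {x : ℝ} (hf : ContDiffAt ℝ 2 f x) :
    (fun t => f (x + t) - f x - t * deriv f x - t ^ 2 / 2 * deriv (deriv f) x)
      =o[nhds (0:ℝ)] fun t : ℝ => t ^ 2 := by
  obtain ⟨s, hso, hxs, hfs⟩ : ∃ s, IsOpen s ∧ x ∈ s ∧ ContDiffOn ℝ 2 f s := by
    obtain ⟨u, huo, hxu, hfu⟩ := hf.contDiffOn' le_rfl (by simp)
    exact ⟨u, huo, hxu, by simpa using hfu⟩
  have hd1 : ∀ y ∈ s, HasDerivAt f (deriv f y) y := fun y hy =>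
    ((hfs.differentiableOn (by norm_num) y hy).differentiableAt (hso.mem_nhds hy)).hasDerivAt
  have hcd1 : ContDiffOn ℝ 1 (deriv f) s := hfs.deriv_of_isOpen hso (by norm_num)
  have hd2 : HasDerivAt (deriv f) (deriv (deriv f) x) x :=
    ((hcd1.differentiableOn (by norm_num) x hxs).differentiableAt (hso.mem_nhds hxs)).hasDerivAt
  set f' := deriv f x with hf'
  set f'' := deriv (deriv f) x with hf''
  have hlo : (fun t => deriv f (x + t) - f' - t * f'') =o[nhds (0:ℝ)] fun t => t := by
    have h0 := hasDerivAt_iff_isLittleO.1 hd2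
    have hc : Tendsto (fun t : ℝ => x + t) (nhds 0) (nhds x) := by
      simpa using (continuous_add_left x).tendsto (0:ℝ)
    have := h0.comp_tendsto hc
    simp only [Function.comp_def, add_sub_cancel_left, smul_eq_mul] at this
    simpa [← hf'] using this
  rw [isLittleO_iff]
  intro c hc
  have hev : ∀ᶠ t in nhds (0:ℝ), ‖deriv f (x + t) - f' - t * f''‖ ≤ c * ‖t‖ ∧ x + t ∈ s := by
    refine (isLittleO_iff.1 hlo hc).and ?_
    have : Tendsto (fun t : ℝ => x + t) (nhds 0) (nhds x) := by
      simpa using (continuous_add_left x).tendsto (0:ℝ)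
    exact this (hso.mem_nhds hxs)
  obtain ⟨r, hr, hball⟩ := Metric.eventually_nhds_iff.1 hev
  have hder : ∀ t : ℝ, x + t ∈ s → HasDerivAt
      (fun t => f (x + t) - f x - t * f' - t ^ 2 / 2 * f'')
      (deriv f (x + t) - f' - t * f'') t := by
    intro t hts
    have h1 : HasDerivAt (fun t : ℝ => f (x + t)) (deriv f (x + t)) t := by
      have := (hd1 (x + t) hts).comp t ((hasDerivAt_id t).const_add x)
      rw [mul_one] at this
      exact this
    have h2 : HasDerivAt (fun t : ℝ => t ^ 2 / 2 * f'') (t * f'') t := by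
      have := (hasDerivAt_pow 2 t).mul_const (f'' / 2)
      have heq : (fun t : ℝ => t ^ 2 * (f'' / 2)) = fun t : ℝ => t ^ 2 / 2 * f'' := by
        funext u; ring
      rw [heq] at this
      refine this.congr_deriv ?_
      push_cast; ring
    have h3 : HasDerivAt (fun t : ℝ => t * f') f' t := by
      simpa using (hasDerivAt_id t).mul_const f'
    exact ((h1.sub_const (f x)).sub h3).sub h2
  filter_upwards [Metric.ball_mem_nhds (0:ℝ) hr] with t ht
  rw [Metric.mem_ball, Real.dist_eq, sub_zero] at ht
  set φ : ℝ → ℝ := fun t => f (x + t) - f x - t * f' - t ^ 2 / 2 * f'' with hφ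
  set ψ : ℝ → ℝ := fun t => deriv f (x + t) - f' - t * f'' with hψ
  have hφ0 : φ 0 = 0 := by simp [hφ]
  rcases le_total 0 t with ht0 | ht0
  · have key : ∀ u ∈ Icc (0:ℝ) t, ‖φ u - φ 0‖ ≤ (c * |t|) * (u - 0) := by
      refine norm_image_sub_le_of_norm_deriv_le_segment' (f' := ψ) (fun u hu => ?_) (fun u hu => ?_)
      · have hus : x + u ∈ s := by
          refine (hball (y := u) ?_).2
          rw [Real.dist_eq, sub_zero]
          calc |u| ≤ |t| := by rw [abs_of_nonneg hu.1, abs_of_nonneg ht0]; exact hu.2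
          _ < r := ht
        exact (hder u hus).hasDerivWithinAt
      · have hu' : |u| < r := by
          calc |u| ≤ |t| := by
                rw [abs_of_nonneg hu.1, abs_of_nonneg ht0]; exact hu.2.le
          _ < r := ht
        have := (hball (y := u) (by rwa [Real.dist_eq, sub_zero])).1
        calc ‖ψ u‖ ≤ c * ‖u‖ := this
          _ ≤ c * |t| := by
              gcongr
              rw [Real.norm_eq_abs, abs_of_nonneg hu.1, abs_of_nonneg ht0]; exact hu.2.le
    have := key t (right_mem_Icc.2 ht0)
    rw [hφ0, sub_zero, sub_zero] at this
    calc ‖φ t‖ ≤ c * |t| * t := this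
      _ = c * ‖t ^ 2‖ := by
          rw [Real.norm_eq_abs, abs_of_nonneg (sq_nonneg t), abs_of_nonneg ht0]; ring
  · have key : ∀ u ∈ Icc t (0:ℝ), ‖φ u - φ t‖ ≤ (c * |t|) * (u - t) := by
      refine norm_image_sub_le_of_norm_deriv_le_segment' (f' := ψ) (fun u hu => ?_) (fun u hu => ?_)
      · have hus : x + u ∈ s := by
          refine (hball (y := u) ?_).2
          rw [Real.dist_eq, sub_zero]
          calc |u| ≤ |t| := by rw [abs_of_nonpos hu.2, abs_of_nonpos ht0]; linarith [hu.1]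
          _ < r := ht
        exact (hder u hus).hasDerivWithinAt
      · have hu' : |u| ≤ |t| := by
          rw [abs_of_nonpos (by linarith [hu.2.le] : u ≤ 0), abs_of_nonpos ht0]
          linarith [hu.1]
        have := (hball (y := u) (by rw [Real.dist_eq, sub_zero]; exact lt_of_le_of_lt hu' ht)).1
        calc ‖ψ u‖ ≤ c * ‖u‖ := this
          _ ≤ c * |t| := by gcongr; rw [Real.norm_eq_abs]; exact hu'
    have := key 0 (right_mem_Icc.2 ht0)
    rw [hφ0, zero_sub, norm_neg, zero_sub] at this
    calc ‖φ t‖ ≤ c * |t| * (-t) := this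
      _ = c * ‖t ^ 2‖ := by
          rw [Real.norm_eq_abs, abs_of_nonneg (sq_nonneg t), abs_of_nonpos ht0]; ring



lemma sbound (k1 k2 e1 nu c2 ra rm : ℝ) (h1 : 0 < e1) (h11 : e1 ≤ 1) (hnu : |nu| ≤ e1)
    (hc2 : |c2| ≤ e1 ^ 2 / 2) (hra : |ra| ≤ e1 ^ 2) (hrm : |rm| ≤ e1 ^ 2) :
    |(e1 + nu) * k1 + c2 * k2 + ra - rm| ≤ (2 * |k1| + |k2| + 2) * e1 := by
  have habs : |(e1 + nu) * k1 + c2 * k2 + ra - rm|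
      ≤ |e1 + nu| * |k1| + |c2| * |k2| + |ra| + |rm| := by
    calc |(e1 + nu) * k1 + c2 * k2 + ra - rm|
        ≤ |(e1 + nu) * k1 + c2 * k2 + ra| + |rm| := abs_sub _ _
      _ ≤ (|(e1 + nu) * k1| + |c2 * k2| + |ra|) + |rm| := by
          gcongr
          exact abs_add_three _ _ _
      _ = |e1 + nu| * |k1| + |c2| * |k2| + |ra| + |rm| := by rw [abs_mul, abs_mul]
  have h2 : |e1 + nu| ≤ 2 * e1 := by
    rw [abs_le]
    constructor <;> [linarith [abs_le.1 hnu]; linarith [(abs_le.1 hnu).2]]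
  have he2 : e1 ^ 2 ≤ e1 := by nlinarith
  nlinarith [mul_le_mul_of_nonneg_right h2 (abs_nonneg k1),
    mul_le_mul_of_nonneg_right hc2 (abs_nonneg k2),
    mul_le_mul_of_nonneg_right he2 (abs_nonneg k2),
    abs_nonneg k1, abs_nonneg k2, habs]

lemma key_alg (A B M h0 Up Um u0 k1 k2 u1 u2 e1 e2 nu : ℝ) (he2 : e2 ≠ 0)
    (heq : (A - B) * u0 = (M - B) * Um + (A - M) * Up) :
    2 * k1 * u1 * nu + e1 * e2 * k1 * u2 + e1 ^ 2 * u1 * k2 - u1 * k2 * nu ^ 2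
      = -u1 * ((A - h0 - e1 * k1 - e1 ^ 2 / 2 * k2)
            + (B - h0 - -e1 * k1 - (-e1) ^ 2 / 2 * k2)
            - 2 * (M - h0 - -nu * k1 - (-nu) ^ 2 / 2 * k2))
        + -(e2 * u2 / 2) * ((A - h0 - e1 * k1 - e1 ^ 2 / 2 * k2)
            - (B - h0 - -e1 * k1 - (-e1) ^ 2 / 2 * k2))
        - (A - M) * ((Up - u0 - e2 * u1 - e2 ^ 2 / 2 * u2) / e2)
        - (M - B) * ((Um - u0 - -e2 * u1 - (-e2) ^ 2 / 2 * u2) / e2) := by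
  field_simp
  linear_combination (-4 : ℝ) * heq


set_option maxHeartbeats 1000000 in
theorem stmt_10 (U h : ℝ → ℝ) (w₀ p₀ : ℝ) (hp₀ : p₀ ∈ Ioo (0:ℝ) 1)
    (hUC2 : ContDiffAt ℝ 2 U w₀) (hU' : 0 < deriv U w₀)
    (hhC2 : ContDiffAt ℝ 2 h p₀) (hh' : 0 < deriv h p₀)
    (μ : ℝ → ℝ → ℝ) (δ : ℝ) (hδ : 0 < δ)
    (hμbd : ∀ ε₁ ∈ Ioo (0:ℝ) δ, ∀ ε₂ ∈ Ioo (0:ℝ) δ, μ ε₁ ε₂ ∈ Icc (-ε₁) ε₁)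
    (hμeq : ∀ ε₁ ∈ Ioo (0:ℝ) δ, ∀ ε₂ ∈ Ioo (0:ℝ) δ,
      (h (p₀ + ε₁) - h (p₀ - ε₁)) * U w₀
        = (h (p₀ - μ ε₁ ε₂) - h (p₀ - ε₁)) * U (w₀ - ε₂)
          + (h (p₀ + ε₁) - h (p₀ - μ ε₁ ε₂)) * U (w₀ + ε₂)) :
    (fun p : ℝ × ℝ =>
        μ p.1 p.2 - (-(1/2) * p.1 * p.2 * (deriv (deriv U) w₀ / deriv U w₀)
          - (1/2) * p.1^2 * (deriv (deriv h) p₀ / deriv h p₀)))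
      =o[nhdsWithin (0, 0) (Ioi (0:ℝ) ×ˢ Ioi (0:ℝ))]
        (fun p : ℝ × ℝ => p.1 * p.2 + p.1^2) := by
  have hUne : deriv U w₀ ≠ 0 := ne_of_gt hU'
  have hkne : deriv h p₀ ≠ 0 := ne_of_gt hh'
  set l := nhdsWithin ((0:ℝ), (0:ℝ)) (Ioi (0:ℝ) ×ˢ Ioi (0:ℝ)) with hldef
  have hll : l ≤ nhds ((0:ℝ), (0:ℝ)) := nhdsWithin_le_nhds
  have t1 : Tendsto (fun p : ℝ × ℝ => p.1) l (nhds (0:ℝ)) := by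
    have := (continuous_fst.tendsto ((0:ℝ), (0:ℝ))).mono_left hll
    simpa using this
  have t2 : Tendsto (fun p : ℝ × ℝ => p.2) l (nhds (0:ℝ)) := by
    have := (continuous_snd.tendsto ((0:ℝ), (0:ℝ))).mono_left hll
    simpa using this
  have hmem : ∀ᶠ p : ℝ × ℝ in l, 0 < p.1 ∧ 0 < p.2 := by
    filter_upwards [self_mem_nhdsWithin] with p hp
    exact ⟨(Set.mem_prod.1 hp).1, (Set.mem_prod.1 hp).2⟩
  have habs1 : ∀ᶠ p : ℝ × ℝ in l, |p.1| < δ := by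
    filter_upwards [t1 (Metric.ball_mem_nhds (0:ℝ) hδ)] with p hp
    simpa [Real.dist_eq] using hp
  have habs2 : ∀ᶠ p : ℝ × ℝ in l, |p.2| < δ := by
    filter_upwards [t2 (Metric.ball_mem_nhds (0:ℝ) hδ)] with p hp
    simpa [Real.dist_eq] using hp
  have habs3 : ∀ᶠ p : ℝ × ℝ in l, |p.1| < 1 := by
    filter_upwards [t1 (Metric.ball_mem_nhds (0:ℝ) one_pos)] with p hp
    simpa [Real.dist_eq] using hp
  have hsm : ∀ᶠ p : ℝ × ℝ in l,
      (0 < p.1 ∧ p.1 < δ) ∧ (0 < p.2 ∧ p.2 < δ) ∧ p.1 ≤ 1 := by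
    filter_upwards [hmem, habs1, habs2, habs3] with p h0 h1 h2 h3
    exact ⟨⟨h0.1, lt_of_abs_lt h1⟩, ⟨h0.2, lt_of_abs_lt h2⟩, (lt_of_abs_lt h3).le⟩
  have hbd : ∀ᶠ p : ℝ × ℝ in l, |μ p.1 p.2| ≤ p.1 := by
    filter_upwards [hsm] with p hp
    have := hμbd p.1 ⟨hp.1.1, hp.1.2⟩ p.2 ⟨hp.2.1.1, hp.2.1.2⟩
    exact abs_le.2 ⟨this.1, this.2⟩
  have hνt : Tendsto (fun p : ℝ × ℝ => μ p.1 p.2) l (nhds (0:ℝ)) := by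
    apply squeeze_zero_norm' ?_ t1
    filter_upwards [hbd] with p hp
    simpa using hp
  have hU2 := peano_aux hUC2
  have hh2 := peano_aux hhC2
  have Oa : (fun p : ℝ × ℝ => (h (p₀ + p.1) - h p₀ - p.1 * deriv h p₀ - p.1 ^ 2 / 2 * deriv (deriv h) p₀)) =o[l] fun p : ℝ × ℝ => p.1 ^ 2 := by
    have raw := hh2.comp_tendsto t1
    simp only [Function.comp_def] at raw
    exact raw.congr (fun p => by ring) (fun p => by ring)
  have tn1 : Tendsto (fun p : ℝ × ℝ => -p.1) l (nhds (0:ℝ)) := by simpa using t1.neg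
  have Ob : (fun p : ℝ × ℝ => (h (p₀ + (-p.1)) - h p₀ - (-p.1) * deriv h p₀ - (-p.1) ^ 2 / 2 * deriv (deriv h) p₀)) =o[l] fun p : ℝ × ℝ => p.1 ^ 2 := by
    have raw := hh2.comp_tendsto tn1
    simp only [Function.comp_def] at raw
    exact raw.congr (fun p => by ring) (fun p => by ring)
  have tnν : Tendsto (fun p : ℝ × ℝ => -(μ p.1 p.2)) l (nhds (0:ℝ)) := by simpa using hνt.neg
  have Omm : (fun p : ℝ × ℝ => (h (p₀ + (-(μ p.1 p.2))) - h p₀ - (-(μ p.1 p.2)) * deriv h p₀ - (-(μ p.1 p.2)) ^ 2 / 2 * deriv (deriv h) p₀)) =o[l] fun p : ℝ × ℝ => (μ p.1 p.2) ^ 2 := by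
    have raw := hh2.comp_tendsto tnν
    simp only [Function.comp_def] at raw
    exact raw.congr (fun p => by ring) (fun p => by ring)
  have hν2O : (fun p : ℝ × ℝ => (μ p.1 p.2) ^ 2) =O[l] fun p : ℝ × ℝ => p.1 ^ 2 := by
    rw [isBigO_iff]
    refine ⟨1, ?_⟩
    filter_upwards [hbd, hmem] with p hp h0
    simp only [Real.norm_eq_abs, one_mul, abs_pow]
    exact pow_le_pow_left₀ (abs_nonneg _) (hp.trans_eq (abs_of_pos h0.1).symm) 2
  have Om : (fun p : ℝ × ℝ => (h (p₀ + (-(μ p.1 p.2))) - h p₀ - (-(μ p.1 p.2)) * deriv h p₀ - (-(μ p.1 p.2)) ^ 2 / 2 * deriv (deriv h) p₀)) =o[l] fun p : ℝ × ℝ => p.1 ^ 2 :=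
    Omm.trans_isBigO hν2O
  have tn2 : Tendsto (fun p : ℝ × ℝ => -p.2) l (nhds (0:ℝ)) := by simpa using t2.neg
  have OqU : (fun p : ℝ × ℝ => (U (w₀ + p.2) - U w₀ - p.2 * deriv U w₀ - p.2 ^ 2 / 2 * deriv (deriv U) w₀)) =o[l] fun p : ℝ × ℝ => p.2 ^ 2 := by
    have raw := hU2.comp_tendsto t2
    simp only [Function.comp_def] at raw
    exact raw.congr (fun p => by ring) (fun p => by ring)
  have OrU : (fun p : ℝ × ℝ => (U (w₀ + (-p.2)) - U w₀ - (-p.2) * deriv U w₀ - (-p.2) ^ 2 / 2 * deriv (deriv U) w₀)) =o[l] fun p : ℝ × ℝ => p.2 ^ 2 := by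
    have raw := hU2.comp_tendsto tn2
    simp only [Function.comp_def] at raw
    exact raw.congr (fun p => by ring) (fun p => by ring)
  have Oq : (fun p : ℝ × ℝ => (U (w₀ + p.2) - U w₀ - p.2 * deriv U w₀ - p.2 ^ 2 / 2 * deriv (deriv U) w₀) / p.2) =o[l] fun p : ℝ × ℝ => p.2 := by
    rw [isLittleO_iff]
    intro c hc
    filter_upwards [isLittleO_iff.1 OqU hc, hmem] with p hp h0
    have h2 : (0:ℝ) < |p.2| := abs_pos.2 (ne_of_gt h0.2)
    calc ‖(U (w₀ + p.2) - U w₀ - p.2 * deriv U w₀ - p.2 ^ 2 / 2 * deriv (deriv U) w₀) / p.2‖ = |(U (w₀ + p.2) - U w₀ - p.2 * deriv U w₀ - p.2 ^ 2 / 2 * deriv (deriv U) w₀)| / |p.2| := by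
          rw [norm_div, Real.norm_eq_abs, Real.norm_eq_abs]
      _ ≤ (c * ‖p.2 ^ 2‖) / |p.2| := by gcongr; exact hp
      _ = c * ‖p.2‖ := by
          have h2' : |p.2| ≠ 0 := ne_of_gt h2
          rw [Real.norm_eq_abs, Real.norm_eq_abs, abs_pow]
          field_simp
  have Or : (fun p : ℝ × ℝ => (U (w₀ + (-p.2)) - U w₀ - (-p.2) * deriv U w₀ - (-p.2) ^ 2 / 2 * deriv (deriv U) w₀) / p.2) =o[l] fun p : ℝ × ℝ => p.2 := by
    rw [isLittleO_iff]
    intro c hc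
    filter_upwards [isLittleO_iff.1 OrU hc, hmem] with p hp h0
    have h2 : (0:ℝ) < |p.2| := abs_pos.2 (ne_of_gt h0.2)
    calc ‖(U (w₀ + (-p.2)) - U w₀ - (-p.2) * deriv U w₀ - (-p.2) ^ 2 / 2 * deriv (deriv U) w₀) / p.2‖ = |(U (w₀ + (-p.2)) - U w₀ - (-p.2) * deriv U w₀ - (-p.2) ^ 2 / 2 * deriv (deriv U) w₀)| / |p.2| := by
          rw [norm_div, Real.norm_eq_abs, Real.norm_eq_abs]
      _ ≤ (c * ‖p.2 ^ 2‖) / |p.2| := by gcongr; exact hp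
      _ = c * ‖p.2‖ := by
          have h2' : |p.2| ≠ 0 := ne_of_gt h2
          rw [Real.norm_eq_abs, Real.norm_eq_abs, abs_pow]
          field_simp
  have hE1 : (fun p : ℝ × ℝ => p.1 ^ 2) =O[l] (fun p : ℝ × ℝ => p.1 * p.2 + p.1 ^ 2) := by
    rw [isBigO_iff]
    refine ⟨1, ?_⟩
    filter_upwards [hmem] with p h0
    rw [one_mul, Real.norm_eq_abs, Real.norm_eq_abs, abs_of_pos (pow_pos h0.1 2),
      abs_of_pos (by nlinarith [mul_pos h0.1 h0.2, pow_pos h0.1 2] : (0:ℝ) < p.1 * p.2 + p.1 ^ 2)]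
    nlinarith [mul_pos h0.1 h0.2]
  have hE2 : (fun p : ℝ × ℝ => p.1 * p.2) =O[l] (fun p : ℝ × ℝ => p.1 * p.2 + p.1 ^ 2) := by
    rw [isBigO_iff]
    refine ⟨1, ?_⟩
    filter_upwards [hmem] with p h0
    rw [one_mul, Real.norm_eq_abs, Real.norm_eq_abs, abs_of_pos (mul_pos h0.1 h0.2),
      abs_of_pos (by nlinarith [mul_pos h0.1 h0.2, pow_pos h0.1 2] : (0:ℝ) < p.1 * p.2 + p.1 ^ 2)]
    nlinarith [pow_pos h0.1 2]
  have Osp : (fun p : ℝ × ℝ => (h (p₀ + p.1) - h (p₀ + -(μ p.1 p.2)))) =O[l] fun p : ℝ × ℝ => p.1 := by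
    rw [isBigO_iff]
    refine ⟨2 * |deriv h p₀| + |deriv (deriv h) p₀| + 2, ?_⟩
    filter_upwards [hsm, hbd, isLittleO_iff.1 Oa one_pos, isLittleO_iff.1 Om one_pos]
      with p hp hb h1 h2
    have hνb := abs_le.1 hb
    have hp1 : 0 < p.1 := hp.1.1
    have hp11 : p.1 ≤ 1 := hp.2.2
    have hν2 : (μ p.1 p.2) ^ 2 ≤ p.1 ^ 2 := by nlinarith [hνb.1, hνb.2]
    have h1' : |(h (p₀ + p.1) - h p₀ - p.1 * deriv h p₀ - p.1 ^ 2 / 2 * deriv (deriv h) p₀)| ≤ p.1 ^ 2 := by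
      have := h1
      rw [one_mul, Real.norm_eq_abs, Real.norm_eq_abs, abs_pow, abs_of_pos hp1] at this
      exact this
    have h2' : |(h (p₀ + (-(μ p.1 p.2))) - h p₀ - (-(μ p.1 p.2)) * deriv h p₀ - (-(μ p.1 p.2)) ^ 2 / 2 * deriv (deriv h) p₀)| ≤ p.1 ^ 2 := by
      have := h2
      rw [one_mul, Real.norm_eq_abs, Real.norm_eq_abs, abs_pow, abs_of_pos hp1] at this
      exact this
    have hc2' : |(p.1 ^ 2 - (μ p.1 p.2) ^ 2) / 2| ≤ p.1 ^ 2 / 2 :=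
      abs_le.2 ⟨by nlinarith [sq_nonneg (μ p.1 p.2)], by nlinarith [sq_nonneg (μ p.1 p.2)]⟩
    have hid : (h (p₀ + p.1) - h (p₀ + -(μ p.1 p.2)))
        = (p.1 + μ p.1 p.2) * deriv h p₀
          + ((p.1 ^ 2 - (μ p.1 p.2) ^ 2) / 2) * deriv (deriv h) p₀
          + (h (p₀ + p.1) - h p₀ - p.1 * deriv h p₀ - p.1 ^ 2 / 2 * deriv (deriv h) p₀) - (h (p₀ + (-(μ p.1 p.2))) - h p₀ - (-(μ p.1 p.2)) * deriv h p₀ - (-(μ p.1 p.2)) ^ 2 / 2 * deriv (deriv h) p₀) := by ring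
    rw [Real.norm_eq_abs, Real.norm_eq_abs, abs_of_pos hp1, hid]
    exact sbound _ _ _ _ _ _ _ hp1 hp11 hb hc2' h1' h2'
  have Osm : (fun p : ℝ × ℝ => (h (p₀ + -(μ p.1 p.2)) - h (p₀ + -p.1))) =O[l] fun p : ℝ × ℝ => p.1 := by
    rw [isBigO_iff]
    refine ⟨2 * |deriv h p₀| + |deriv (deriv h) p₀| + 2, ?_⟩
    filter_upwards [hsm, hbd, isLittleO_iff.1 Ob one_pos, isLittleO_iff.1 Om one_pos]
      with p hp hb h1 h2
    have hνb := abs_le.1 hb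
    have hp1 : 0 < p.1 := hp.1.1
    have hp11 : p.1 ≤ 1 := hp.2.2
    have hν2 : (μ p.1 p.2) ^ 2 ≤ p.1 ^ 2 := by nlinarith [hνb.1, hνb.2]
    have h1' : |(h (p₀ + (-p.1)) - h p₀ - (-p.1) * deriv h p₀ - (-p.1) ^ 2 / 2 * deriv (deriv h) p₀)| ≤ p.1 ^ 2 := by
      have := h1
      rw [one_mul, Real.norm_eq_abs, Real.norm_eq_abs, abs_pow, abs_of_pos hp1] at this
      exact this
    have h2' : |(h (p₀ + (-(μ p.1 p.2))) - h p₀ - (-(μ p.1 p.2)) * deriv h p₀ - (-(μ p.1 p.2)) ^ 2 / 2 * deriv (deriv h) p₀)| ≤ p.1 ^ 2 := by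
      have := h2
      rw [one_mul, Real.norm_eq_abs, Real.norm_eq_abs, abs_pow, abs_of_pos hp1] at this
      exact this
    have hnu' : |-(μ p.1 p.2)| ≤ p.1 := by rwa [abs_neg]
    have hc2' : |((μ p.1 p.2) ^ 2 - p.1 ^ 2) / 2| ≤ p.1 ^ 2 / 2 :=
      abs_le.2 ⟨by nlinarith [sq_nonneg (μ p.1 p.2)], by nlinarith [sq_nonneg (μ p.1 p.2)]⟩
    have hid : (h (p₀ + -(μ p.1 p.2)) - h (p₀ + -p.1))
        = (p.1 + -(μ p.1 p.2)) * deriv h p₀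
          + (((μ p.1 p.2) ^ 2 - p.1 ^ 2) / 2) * deriv (deriv h) p₀
          + (h (p₀ + (-(μ p.1 p.2))) - h p₀ - (-(μ p.1 p.2)) * deriv h p₀ - (-(μ p.1 p.2)) ^ 2 / 2 * deriv (deriv h) p₀) - (h (p₀ + (-p.1)) - h p₀ - (-p.1) * deriv h p₀ - (-p.1) ^ 2 / 2 * deriv (deriv h) p₀) := by ring
    rw [Real.norm_eq_abs, Real.norm_eq_abs, abs_of_pos hp1, hid]
    exact sbound _ _ _ _ _ _ _ hp1 hp11 hnu' hc2' h2' h1'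
  have term1 : (fun p : ℝ × ℝ => -(deriv U w₀) * ((h (p₀ + p.1) - h p₀ - p.1 * deriv h p₀ - p.1 ^ 2 / 2 * deriv (deriv h) p₀) + (h (p₀ + (-p.1)) - h p₀ - (-p.1) * deriv h p₀ - (-p.1) ^ 2 / 2 * deriv (deriv h) p₀) - 2 * (h (p₀ + (-(μ p.1 p.2))) - h p₀ - (-(μ p.1 p.2)) * deriv h p₀ - (-(μ p.1 p.2)) ^ 2 / 2 * deriv (deriv h) p₀))) =o[l] (fun p : ℝ × ℝ => p.1 * p.2 + p.1 ^ 2) :=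
    (((Oa.add Ob).sub (Om.const_mul_left 2)).const_mul_left
      (-(deriv U w₀))).trans_isBigO hE1
  have term2 : (fun p : ℝ × ℝ => -(p.2 * deriv (deriv U) w₀ / 2) * ((h (p₀ + p.1) - h p₀ - p.1 * deriv h p₀ - p.1 ^ 2 / 2 * deriv (deriv h) p₀) - (h (p₀ + (-p.1)) - h p₀ - (-p.1) * deriv h p₀ - (-p.1) ^ 2 / 2 * deriv (deriv h) p₀))) =o[l] (fun p : ℝ × ℝ => p.1 * p.2 + p.1 ^ 2) := by
    have hbO : (fun p : ℝ × ℝ => -(p.2 * deriv (deriv U) w₀ / 2)) =O[l]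
        (fun _ : ℝ × ℝ => (1:ℝ)) := by
      have ht : Tendsto (fun p : ℝ × ℝ => -(p.2 * deriv (deriv U) w₀ / 2)) l
          (nhds (-(0 * deriv (deriv U) w₀ / 2))) := ((t2.mul_const _).div_const 2).neg
      exact ht.isBigO_one ℝ
    have := hbO.mul_isLittleO (Oa.sub Ob)
    exact (this.congr (fun p => rfl) (fun p => by ring)).trans_isBigO hE1
  have term3 : (fun p : ℝ × ℝ => (h (p₀ + p.1) - h (p₀ + -(μ p.1 p.2))) * ((U (w₀ + p.2) - U w₀ - p.2 * deriv U w₀ - p.2 ^ 2 / 2 * deriv (deriv U) w₀) / p.2)) =o[l] (fun p : ℝ × ℝ => p.1 * p.2 + p.1 ^ 2) :=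
    (Osp.mul_isLittleO Oq).trans_isBigO hE2
  have term4 : (fun p : ℝ × ℝ => (h (p₀ + -(μ p.1 p.2)) - h (p₀ + -p.1)) * ((U (w₀ + (-p.2)) - U w₀ - (-p.2) * deriv U w₀ - (-p.2) ^ 2 / 2 * deriv (deriv U) w₀) / p.2)) =o[l] (fun p : ℝ × ℝ => p.1 * p.2 + p.1 ^ 2) :=
    (Osm.mul_isLittleO Or).trans_isBigO hE2
  have hF1 : (fun p : ℝ × ℝ => -(deriv U w₀) * ((h (p₀ + p.1) - h p₀ - p.1 * deriv h p₀ - p.1 ^ 2 / 2 * deriv (deriv h) p₀) + (h (p₀ + (-p.1)) - h p₀ - (-p.1) * deriv h p₀ - (-p.1) ^ 2 / 2 * deriv (deriv h) p₀) - 2 * (h (p₀ + (-(μ p.1 p.2))) - h p₀ - (-(μ p.1 p.2)) * deriv h p₀ - (-(μ p.1 p.2)) ^ 2 / 2 * deriv (deriv h) p₀)) + -(p.2 * deriv (deriv U) w₀ / 2) * ((h (p₀ + p.1) - h p₀ - p.1 * deriv h p₀ - p.1 ^ 2 / 2 * deriv (deriv h) p₀) - (h (p₀ + (-p.1)) - h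 p₀ - (-p.1) * deriv h p₀ - (-p.1) ^ 2 / 2 * deriv (deriv h) p₀)) - (h (p₀ + p.1) - h (p₀ + -(μ p.1 p.2))) * ((U (w₀ + p.2) - U w₀ - p.2 * deriv U w₀ - p.2 ^ 2 / 2 * deriv (deriv U) w₀) / p.2) - (h (p₀ + -(μ p.1 p.2)) - h (p₀ + -p.1)) * ((U (w₀ + (-p.2)) - U w₀ - (-p.2) * deriv U w₀ - (-p.2) ^ 2 / 2 * deriv (deriv U) w₀) / p.2)) =o[l] (fun p : ℝ × ℝ => p.1 * p.2 + p.1 ^ 2) :=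
    ((term1.add term2).sub term3).sub term4
  have hkey : (fun p : ℝ × ℝ => 2 * deriv h p₀ * deriv U w₀ * (μ p.1 p.2) + p.1 * p.2 * deriv h p₀ * deriv (deriv U) w₀ + p.1 ^ 2 * deriv U w₀ * deriv (deriv h) p₀ - deriv U w₀ * deriv (deriv h) p₀ * (μ p.1 p.2) ^ 2) =ᶠ[l] (fun p : ℝ × ℝ => -(deriv U w₀) * ((h (p₀ + p.1) - h p₀ - p.1 * deriv h p₀ - p.1 ^ 2 / 2 * deriv (deriv h) p₀) + (h (p₀ + (-p.1)) - h p₀ - (-p.1) * deriv h p₀ - (-p.1) ^ 2 / 2 * deriv (deriv h) p₀) - 2 * (h (p₀ + (-(μ p.1 p.2))) - h p₀ - (-(μ p.1 p.2)) * deriv h p₀ - (-(μ p.1 p.2)) ^ 2 / 2 * deriv (deriv h) p₀)) + -(p.2 * deriv (deriv U) w₀ / 2) * ((h (p₀ + p.1) - h p₀ - p.1 * deriv h p₀ - p.1 ^ 2 / 2 * deriv (deriv h) p₀) - (h (p₀ + (-p.1)) - h p₀ - (-p.1) * deriv h p₀ - (-p.1) ^ 2 / 2 * deriv (deriv h) p₀))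 - (h (p₀ + p.1) - h (p₀ + -(μ p.1 p.2))) * ((U (w₀ + p.2) - U w₀ - p.2 * deriv U w₀ - p.2 ^ 2 / 2 * deriv (deriv U) w₀) / p.2) - (h (p₀ + -(μ p.1 p.2)) - h (p₀ + -p.1)) * ((U (w₀ + (-p.2)) - U w₀ - (-p.2) * deriv U w₀ - (-p.2) ^ 2 / 2 * deriv (deriv U) w₀) / p.2)) := by
    filter_upwards [hsm] with p hp
    have heq := hμeq p.1 ⟨hp.1.1, hp.1.2⟩ p.2 ⟨hp.2.1.1, hp.2.1.2⟩
    rw [show p₀ - p.1 = p₀ + -p.1 from by ring,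
      show p₀ - μ p.1 p.2 = p₀ + -(μ p.1 p.2) from by ring,
      show w₀ - p.2 = w₀ + -p.2 from by ring] at heq
    exact key_alg _ _ _ _ _ _ _ _ _ _ _ _ _ _ (ne_of_gt hp.2.1.1) heq
  have hmain : (fun p : ℝ × ℝ => 2 * deriv h p₀ * deriv U w₀ * (μ p.1 p.2) + p.1 * p.2 * deriv h p₀ * deriv (deriv U) w₀ + p.1 ^ 2 * deriv U w₀ * deriv (deriv h) p₀ - deriv U w₀ * deriv (deriv h) p₀ * (μ p.1 p.2) ^ 2) =o[l] (fun p : ℝ × ℝ => p.1 * p.2 + p.1 ^ 2) :=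
    hF1.congr' hkey.symm (EventuallyEq.refl _ _)
  have o12 : (fun p : ℝ × ℝ => p.1 * p.2) =o[l] fun p : ℝ × ℝ => p.1 := by
    have := (isBigO_refl (fun p : ℝ × ℝ => p.1) l).mul_isLittleO
      ((isLittleO_one_iff ℝ).2 t2)
    exact this.congr (fun p => rfl) (fun p => by ring)
  have o11 : (fun p : ℝ × ℝ => p.1 ^ 2) =o[l] fun p : ℝ × ℝ => p.1 := by
    have := (isBigO_refl (fun p : ℝ × ℝ => p.1) l).mul_isLittleO
      ((isLittleO_one_iff ℝ).2 t1)
    exact this.congr (fun p => by ring) (fun p => by ring)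
  have hEo : (fun p : ℝ × ℝ => p.1 * p.2 + p.1 ^ 2) =o[l] fun p : ℝ × ℝ => p.1 := o12.add o11
  have hF1o : (fun p : ℝ × ℝ => -(deriv U w₀) * ((h (p₀ + p.1) - h p₀ - p.1 * deriv h p₀ - p.1 ^ 2 / 2 * deriv (deriv h) p₀) + (h (p₀ + (-p.1)) - h p₀ - (-p.1) * deriv h p₀ - (-p.1) ^ 2 / 2 * deriv (deriv h) p₀) - 2 * (h (p₀ + (-(μ p.1 p.2))) - h p₀ - (-(μ p.1 p.2)) * deriv h p₀ - (-(μ p.1 p.2)) ^ 2 / 2 * deriv (deriv h) p₀)) + -(p.2 * deriv (deriv U) w₀ / 2) * ((h (p₀ + p.1) - h p₀ - p.1 * deriv h p₀ - p.1 ^ 2 / 2 * deriv (deriv h) p₀) - (h (p₀ + (-p.1)) - h p₀ - (-p.1) * deriv h p₀ - (-p.1) ^ 2 / 2 * deriv (deriv h) p₀)) - (h (p₀ + p.1) - h (p₀ + -(μ p.1 p.2))) * ((U (w₀ + p.2) - U w₀ - p.2 * deriv U w₀ - p.2 ^ 2 / 2 * deriv (deriv U) w₀) / p.2) - (h (p₀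 + -(μ p.1 p.2)) - h (p₀ + -p.1)) * ((U (w₀ + (-p.2)) - U w₀ - (-p.2) * deriv U w₀ - (-p.2) ^ 2 / 2 * deriv (deriv U) w₀) / p.2)) =o[l] fun p : ℝ × ℝ => p.1 :=
    hF1.trans hEo
  have hc0 : (0:ℝ) < (2 * deriv h p₀ * deriv U w₀) := by positivity
  have hsm3 : ∀ᶠ p : ℝ × ℝ in l,
      |deriv U w₀ * deriv (deriv h) p₀| * p.1 ≤ (2 * deriv h p₀ * deriv U w₀) / 2 := by
    have ht : Tendsto (fun p : ℝ × ℝ => |deriv U w₀ * deriv (deriv h) p₀| * p.1) l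
        (nhds (0:ℝ)) := by
      have := t1.const_mul |deriv U w₀ * deriv (deriv h) p₀|
      simpa using this
    exact (ht.eventually_lt_const (half_pos hc0)).mono fun p hp => hp.le
  have hWbd : ∀ᶠ p : ℝ × ℝ in l, |μ p.1 p.2| ≤ (((2/(2 * deriv h p₀ * deriv U w₀)) * |(p.1 * p.2 * deriv h p₀ * deriv (deriv U) w₀)| + (2/(2 * deriv h p₀ * deriv U w₀)) * |(p.1 ^ 2 * deriv U w₀ * deriv (deriv h) p₀)|) + (2/(2 * deriv h p₀ * deriv U w₀)) * |-(deriv U w₀) * ((h (p₀ + p.1) - h p₀ - p.1 * deriv h p₀ - p.1 ^ 2 / 2 * deriv (deriv h) p₀) + (h (p₀ + (-p.1)) - h p₀ - (-p.1) * deriv h p₀ - (-p.1) ^ 2 / 2 * deriv (deriv h) p₀) - 2 * (h (p₀ + (-(μ p.1 p.2))) - h p₀ - (-(μ p.1 p.2)) * deriv h p₀ - (-(μ p.1 p.2)) ^ 2 / 2 * deriv (deriv h) p₀)) + -(p.2 * deriv (deriv U) w₀ / 2) * ((h (p₀ + p.1) - h p₀ - p.1 * deriv h p₀ - p.1 ^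 2 / 2 * deriv (deriv h) p₀) - (h (p₀ + (-p.1)) - h p₀ - (-p.1) * deriv h p₀ - (-p.1) ^ 2 / 2 * deriv (deriv h) p₀)) - (h (p₀ + p.1) - h (p₀ + -(μ p.1 p.2))) * ((U (w₀ + p.2) - U w₀ - p.2 * deriv U w₀ - p.2 ^ 2 / 2 * deriv (deriv U) w₀) / p.2) - (h (p₀ + -(μ p.1 p.2)) - h (p₀ + -p.1)) * ((U (w₀ + (-p.2)) - U w₀ - (-p.2) * deriv U w₀ - (-p.2) ^ 2 / 2 * deriv (deriv U) w₀) / p.2)|) := by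
    filter_upwards [hkey, hbd, hsm3, hmem] with p hk hb hs h0
    have e1 : (2 * deriv h p₀ * deriv U w₀) * (μ p.1 p.2)
        = -(p.1 * p.2 * deriv h p₀ * deriv (deriv U) w₀) - (p.1 ^ 2 * deriv U w₀ * deriv (deriv h) p₀) + deriv U w₀ * deriv (deriv h) p₀ * (μ p.1 p.2) ^ 2
          + (-(deriv U w₀) * ((h (p₀ + p.1) - h p₀ - p.1 * deriv h p₀ - p.1 ^ 2 / 2 * deriv (deriv h) p₀) + (h (p₀ + (-p.1)) - h p₀ - (-p.1) * deriv h p₀ - (-p.1) ^ 2 / 2 * deriv (deriv h) p₀) - 2 * (h (p₀ + (-(μ p.1 p.2))) - h p₀ - (-(μ p.1 p.2)) * deriv h p₀ - (-(μ p.1 p.2)) ^ 2 / 2 * deriv (deriv h) p₀)) + -(p.2 * deriv (deriv U) w₀ / 2) * ((h (p₀ + p.1) - h p₀ - p.1 * deriv h p₀ - p.1 ^ 2 / 2 * deriv (deriv h) p₀) - (h (p₀ + (-p.1)) - h p₀ - (-p.1) * deriv h p₀ - (-p.1) ^ 2 / 2 * deriv (deriv h) p₀)) - (h (p₀ + p.1)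 - h (p₀ + -(μ p.1 p.2))) * ((U (w₀ + p.2) - U w₀ - p.2 * deriv U w₀ - p.2 ^ 2 / 2 * deriv (deriv U) w₀) / p.2) - (h (p₀ + -(μ p.1 p.2)) - h (p₀ + -p.1)) * ((U (w₀ + (-p.2)) - U w₀ - (-p.2) * deriv U w₀ - (-p.2) ^ 2 / 2 * deriv (deriv U) w₀) / p.2)) := by linear_combination hk
    have habs : |(2 * deriv h p₀ * deriv U w₀) * (μ p.1 p.2)|
        ≤ |(p.1 * p.2 * deriv h p₀ * deriv (deriv U) w₀)| + |(p.1 ^ 2 * deriv U w₀ * deriv (deriv h) p₀)| + |deriv U w₀ * deriv (deriv h) p₀ * (μ p.1 p.2) ^ 2|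
          + |-(deriv U w₀) * ((h (p₀ + p.1) - h p₀ - p.1 * deriv h p₀ - p.1 ^ 2 / 2 * deriv (deriv h) p₀) + (h (p₀ + (-p.1)) - h p₀ - (-p.1) * deriv h p₀ - (-p.1) ^ 2 / 2 * deriv (deriv h) p₀) - 2 * (h (p₀ + (-(μ p.1 p.2))) - h p₀ - (-(μ p.1 p.2)) * deriv h p₀ - (-(μ p.1 p.2)) ^ 2 / 2 * deriv (deriv h) p₀)) + -(p.2 * deriv (deriv U) w₀ / 2) * ((h (p₀ + p.1) - h p₀ - p.1 * deriv h p₀ - p.1 ^ 2 / 2 * deriv (deriv h) p₀) - (h (p₀ + (-p.1)) - h p₀ - (-p.1) * deriv h p₀ - (-p.1) ^ 2 / 2 * deriv (deriv h) p₀)) - (h (p₀ + p.1) - h (p₀ + -(μ p.1 p.2))) * ((U (w₀ + p.2) - U w₀ - p.2 * deriv U w₀ - p.2 ^ 2 / 2 * deriv (deriv U) w₀) / p.2) - (h (p₀ + -(μ p.1 p.2)) - h (p₀ + -p.1)) * ((U (w₀ + (-p.2)) - U w₀ - (-p.2) * deriv U w₀ - (-p.2) ^ 2 / 2 * deriv (deriv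 U) w₀) / p.2)| := by
      rw [e1]
      calc |(-(p.1 * p.2 * deriv h p₀ * deriv (deriv U) w₀) - (p.1 ^ 2 * deriv U w₀ * deriv (deriv h) p₀) + deriv U w₀ * deriv (deriv h) p₀ * (μ p.1 p.2) ^ 2)
            + (-(deriv U w₀) * ((h (p₀ + p.1) - h p₀ - p.1 * deriv h p₀ - p.1 ^ 2 / 2 * deriv (deriv h) p₀) + (h (p₀ + (-p.1)) - h p₀ - (-p.1) * deriv h p₀ - (-p.1) ^ 2 / 2 * deriv (deriv h) p₀) - 2 * (h (p₀ + (-(μ p.1 p.2))) - h p₀ - (-(μ p.1 p.2)) * deriv h p₀ - (-(μ p.1 p.2)) ^ 2 / 2 * deriv (deriv h) p₀)) + -(p.2 * deriv (deriv U) w₀ / 2) * ((h (p₀ + p.1) - h p₀ - p.1 * deriv h p₀ - p.1 ^ 2 / 2 * deriv (deriv h) p₀) - (h (p₀ + (-p.1)) - h p₀ - (-p.1) * deriv h p₀ - (-p.1) ^ 2 / 2 * deriv (deriv h) p₀)) - (h (p₀ + p.1) - h (p₀ + -(μ p.1 p.2))) * ((U (w₀ + p.2) - U w₀ - p.2 *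 deriv U w₀ - p.2 ^ 2 / 2 * deriv (deriv U) w₀) / p.2) - (h (p₀ + -(μ p.1 p.2)) - h (p₀ + -p.1)) * ((U (w₀ + (-p.2)) - U w₀ - (-p.2) * deriv U w₀ - (-p.2) ^ 2 / 2 * deriv (deriv U) w₀) / p.2))|
          ≤ |(-(p.1 * p.2 * deriv h p₀ * deriv (deriv U) w₀) - (p.1 ^ 2 * deriv U w₀ * deriv (deriv h) p₀) + deriv U w₀ * deriv (deriv h) p₀ * (μ p.1 p.2) ^ 2)|
            + |-(deriv U w₀) * ((h (p₀ + p.1) - h p₀ - p.1 * deriv h p₀ - p.1 ^ 2 / 2 * deriv (deriv h) p₀) + (h (p₀ + (-p.1)) - h p₀ - (-p.1) * deriv h p₀ - (-p.1) ^ 2 / 2 * deriv (deriv h) p₀) - 2 * (h (p₀ + (-(μ p.1 p.2))) - h p₀ - (-(μ p.1 p.2)) * deriv h p₀ - (-(μ p.1 p.2)) ^ 2 / 2 * deriv (deriv h) p₀)) + -(p.2 * deriv (deriv U) w₀ / 2) * ((h (p₀ + p.1) - h p₀ - p.1 * deriv h p₀ - p.1 ^ 2 / 2 * deriv (deriv h)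 p₀) - (h (p₀ + (-p.1)) - h p₀ - (-p.1) * deriv h p₀ - (-p.1) ^ 2 / 2 * deriv (deriv h) p₀)) - (h (p₀ + p.1) - h (p₀ + -(μ p.1 p.2))) * ((U (w₀ + p.2) - U w₀ - p.2 * deriv U w₀ - p.2 ^ 2 / 2 * deriv (deriv U) w₀) / p.2) - (h (p₀ + -(μ p.1 p.2)) - h (p₀ + -p.1)) * ((U (w₀ + (-p.2)) - U w₀ - (-p.2) * deriv U w₀ - (-p.2) ^ 2 / 2 * deriv (deriv U) w₀) / p.2)| := abs_add_le _ _
        _ ≤ (|(-(p.1 * p.2 * deriv h p₀ * deriv (deriv U) w₀))| + |(-(p.1 ^ 2 * deriv U w₀ * deriv (deriv h) p₀))| + |deriv U w₀ * deriv (deriv h) p₀ * (μ p.1 p.2) ^ 2|)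
            + |-(deriv U w₀) * ((h (p₀ + p.1) - h p₀ - p.1 * deriv h p₀ - p.1 ^ 2 / 2 * deriv (deriv h) p₀) + (h (p₀ + (-p.1)) - h p₀ - (-p.1) * deriv h p₀ - (-p.1) ^ 2 / 2 * deriv (deriv h) p₀) - 2 * (h (p₀ + (-(μ p.1 p.2))) - h p₀ - (-(μ p.1 p.2)) * deriv h p₀ - (-(μ p.1 p.2)) ^ 2 / 2 * deriv (deriv h) p₀)) + -(p.2 * deriv (deriv U) w₀ / 2) * ((h (p₀ + p.1) - h p₀ - p.1 * deriv h p₀ - p.1 ^ 2 / 2 * deriv (deriv h) p₀) - (h (p₀ + (-p.1)) - h p₀ - (-p.1) * deriv h p₀ - (-p.1) ^ 2 / 2 * deriv (deriv h) p₀)) - (h (p₀ + p.1) - h (p₀ + -(μ p.1 p.2))) * ((U (w₀ + p.2) - U w₀ - p.2 * deriv U w₀ - p.2 ^ 2 / 2 * deriv (deriv U) w₀) / p.2) - (h (p₀ + -(μ p.1 p.2)) - h (p₀ + -p.1)) * ((U (w₀ + (-p.2)) - U w₀ - (-p.2) * deriv U w₀ - (-p.2) ^ 2 / 2 * deriv (deriv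 U) w₀) / p.2)| := by
              gcongr
              exact abs_add_three _ _ _
        _ = |(p.1 * p.2 * deriv h p₀ * deriv (deriv U) w₀)| + |(p.1 ^ 2 * deriv U w₀ * deriv (deriv h) p₀)| + |deriv U w₀ * deriv (deriv h) p₀ * (μ p.1 p.2) ^ 2|
            + |-(deriv U w₀) * ((h (p₀ + p.1) - h p₀ - p.1 * deriv h p₀ - p.1 ^ 2 / 2 * deriv (deriv h) p₀) + (h (p₀ + (-p.1)) - h p₀ - (-p.1) * deriv h p₀ - (-p.1) ^ 2 / 2 * deriv (deriv h) p₀) - 2 * (h (p₀ + (-(μ p.1 p.2))) - h p₀ - (-(μ p.1 p.2)) * deriv h p₀ - (-(μ p.1 p.2)) ^ 2 / 2 * deriv (deriv h) p₀)) + -(p.2 * deriv (deriv U) w₀ / 2) * ((h (p₀ + p.1) - h p₀ - p.1 * deriv h p₀ - p.1 ^ 2 / 2 * deriv (deriv h) p₀) - (h (p₀ + (-p.1)) - h p₀ - (-p.1) * deriv h p₀ - (-p.1) ^ 2 / 2 * deriv (deriv h) p₀)) - (h (p₀ + p.1) - h (p₀ + -(μ p.1 p.2))) * ((U (w₀ +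 p.2) - U w₀ - p.2 * deriv U w₀ - p.2 ^ 2 / 2 * deriv (deriv U) w₀) / p.2) - (h (p₀ + -(μ p.1 p.2)) - h (p₀ + -p.1)) * ((U (w₀ + (-p.2)) - U w₀ - (-p.2) * deriv U w₀ - (-p.2) ^ 2 / 2 * deriv (deriv U) w₀) / p.2)| := by rw [abs_neg, abs_neg]
    have hq : |deriv U w₀ * deriv (deriv h) p₀ * (μ p.1 p.2) ^ 2| ≤ ((2 * deriv h p₀ * deriv U w₀) / 2) * |μ p.1 p.2| := by
      rw [abs_mul]
      have hsq : |(μ p.1 p.2) ^ 2| = |μ p.1 p.2| * |μ p.1 p.2| := by rw [abs_pow]; ring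
      rw [hsq]
      calc |deriv U w₀ * deriv (deriv h) p₀| * (|μ p.1 p.2| * |μ p.1 p.2|)
          ≤ |deriv U w₀ * deriv (deriv h) p₀| * (p.1 * |μ p.1 p.2|) :=
            mul_le_mul_of_nonneg_left
              (mul_le_mul_of_nonneg_right hb (abs_nonneg _)) (abs_nonneg _)
        _ = (|deriv U w₀ * deriv (deriv h) p₀| * p.1) * |μ p.1 p.2| := by ring
        _ ≤ ((2 * deriv h p₀ * deriv U w₀) / 2) * |μ p.1 p.2| := mul_le_mul_of_nonneg_right hs (abs_nonneg _)
    have hC : |(2 * deriv h p₀ * deriv U w₀) * (μ p.1 p.2)| = (2 * deriv h p₀ * deriv U w₀) * |μ p.1 p.2| := by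
      rw [abs_mul, abs_of_pos hc0]
    have hhalf : ((2 * deriv h p₀ * deriv U w₀) / 2) * |μ p.1 p.2|
        ≤ |(p.1 * p.2 * deriv h p₀ * deriv (deriv U) w₀)| + |(p.1 ^ 2 * deriv U w₀ * deriv (deriv h) p₀)| + |-(deriv U w₀) * ((h (p₀ + p.1) - h p₀ - p.1 * deriv h p₀ - p.1 ^ 2 / 2 * deriv (deriv h) p₀) + (h (p₀ + (-p.1)) - h p₀ - (-p.1) * deriv h p₀ - (-p.1) ^ 2 / 2 * deriv (deriv h) p₀) - 2 * (h (p₀ + (-(μ p.1 p.2))) - h p₀ - (-(μ p.1 p.2)) * deriv h p₀ - (-(μ p.1 p.2)) ^ 2 / 2 * deriv (deriv h) p₀)) + -(p.2 * deriv (deriv U) w₀ / 2) * ((h (p₀ + p.1) - h p₀ - p.1 * deriv h p₀ - p.1 ^ 2 / 2 * deriv (deriv h) p₀) - (h (p₀ + (-p.1)) - h p₀ - (-p.1) * deriv h p₀ - (-p.1) ^ 2 / 2 * deriv (deriv h) p₀)) - (h (p₀ + p.1) - h (p₀ + -(μ p.1 p.2))) * ((U (w₀ + p.2) - U w₀ -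 p.2 * deriv U w₀ - p.2 ^ 2 / 2 * deriv (deriv U) w₀) / p.2) - (h (p₀ + -(μ p.1 p.2)) - h (p₀ + -p.1)) * ((U (w₀ + (-p.2)) - U w₀ - (-p.2) * deriv U w₀ - (-p.2) ^ 2 / 2 * deriv (deriv U) w₀) / p.2)| := by
      rw [hC] at habs
      linarith
    have hinv : (2 / (2 * deriv h p₀ * deriv U w₀)) * ((2 * deriv h p₀ * deriv U w₀) / 2) = 1 := by field_simp
    calc |μ p.1 p.2| = ((2 / (2 * deriv h p₀ * deriv U w₀)) * ((2 * deriv h p₀ * deriv U w₀) / 2)) * |μ p.1 p.2| := by rw [hinv, one_mul]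
      _ = (2 / (2 * deriv h p₀ * deriv U w₀)) * (((2 * deriv h p₀ * deriv U w₀) / 2) * |μ p.1 p.2|) := by ring
      _ ≤ (2 / (2 * deriv h p₀ * deriv U w₀)) * (|(p.1 * p.2 * deriv h p₀ * deriv (deriv U) w₀)| + |(p.1 ^ 2 * deriv U w₀ * deriv (deriv h) p₀)| + |-(deriv U w₀) * ((h (p₀ + p.1) - h p₀ - p.1 * deriv h p₀ - p.1 ^ 2 / 2 * deriv (deriv h) p₀) + (h (p₀ + (-p.1)) - h p₀ - (-p.1) * deriv h p₀ - (-p.1) ^ 2 / 2 * deriv (deriv h) p₀) - 2 * (h (p₀ + (-(μ p.1 p.2))) - h p₀ - (-(μ p.1 p.2)) * deriv h p₀ - (-(μ p.1 p.2)) ^ 2 / 2 * deriv (deriv h) p₀)) + -(p.2 * deriv (deriv U) w₀ / 2) * ((h (p₀ + p.1) - h p₀ - p.1 * deriv h p₀ - p.1 ^ 2 / 2 * deriv (deriv h) p₀) - (h (p₀ + (-p.1)) - h p₀ - (-p.1) * deriv h p₀ - (-p.1) ^ 2 / 2 * deriv (deriv h) p₀)) - (h (p₀ + p.1) - h (p₀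 + -(μ p.1 p.2))) * ((U (w₀ + p.2) - U w₀ - p.2 * deriv U w₀ - p.2 ^ 2 / 2 * deriv (deriv U) w₀) / p.2) - (h (p₀ + -(μ p.1 p.2)) - h (p₀ + -p.1)) * ((U (w₀ + (-p.2)) - U w₀ - (-p.2) * deriv U w₀ - (-p.2) ^ 2 / 2 * deriv (deriv U) w₀) / p.2)|) :=
          mul_le_mul_of_nonneg_left hhalf (div_pos two_pos hc0).le
      _ = (((2/(2 * deriv h p₀ * deriv U w₀)) * |(p.1 * p.2 * deriv h p₀ * deriv (deriv U) w₀)| + (2/(2 * deriv h p₀ * deriv U w₀)) * |(p.1 ^ 2 * deriv U w₀ * deriv (deriv h) p₀)|) + (2/(2 * deriv h p₀ * deriv U w₀)) * |-(deriv U w₀) * ((h (p₀ + p.1) - h p₀ - p.1 * deriv h p₀ - p.1 ^ 2 / 2 * deriv (deriv h) p₀) + (h (p₀ + (-p.1)) - h p₀ - (-p.1) * deriv h p₀ - (-p.1) ^ 2 / 2 * deriv (deriv h) p₀) - 2 * (h (p₀ + (-(μ p.1 p.2))) - h p₀ - (-(μ p.1 p.2)) * deriv h p₀ - (-(μ p.1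 p.2)) ^ 2 / 2 * deriv (deriv h) p₀)) + -(p.2 * deriv (deriv U) w₀ / 2) * ((h (p₀ + p.1) - h p₀ - p.1 * deriv h p₀ - p.1 ^ 2 / 2 * deriv (deriv h) p₀) - (h (p₀ + (-p.1)) - h p₀ - (-p.1) * deriv h p₀ - (-p.1) ^ 2 / 2 * deriv (deriv h) p₀)) - (h (p₀ + p.1) - h (p₀ + -(μ p.1 p.2))) * ((U (w₀ + p.2) - U w₀ - p.2 * deriv U w₀ - p.2 ^ 2 / 2 * deriv (deriv U) w₀) / p.2) - (h (p₀ + -(μ p.1 p.2)) - h (p₀ + -p.1)) * ((U (w₀ + (-p.2)) - U w₀ - (-p.2) * deriv U w₀ - (-p.2) ^ 2 / 2 * deriv (deriv U) w₀) / p.2)|) := by ring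
  have hWo : (fun p : ℝ × ℝ => (((2/(2 * deriv h p₀ * deriv U w₀)) * |(p.1 * p.2 * deriv h p₀ * deriv (deriv U) w₀)| + (2/(2 * deriv h p₀ * deriv U w₀)) * |(p.1 ^ 2 * deriv U w₀ * deriv (deriv h) p₀)|) + (2/(2 * deriv h p₀ * deriv U w₀)) * |-(deriv U w₀) * ((h (p₀ + p.1) - h p₀ - p.1 * deriv h p₀ - p.1 ^ 2 / 2 * deriv (deriv h) p₀) + (h (p₀ + (-p.1)) - h p₀ - (-p.1) * deriv h p₀ - (-p.1) ^ 2 / 2 * deriv (deriv h) p₀) - 2 * (h (p₀ + (-(μ p.1 p.2))) - h p₀ - (-(μ p.1 p.2)) * deriv h p₀ - (-(μ p.1 p.2)) ^ 2 / 2 * deriv (deriv h) p₀)) + -(p.2 * deriv (deriv U) w₀ / 2) * ((h (p₀ + p.1) - h p₀ - p.1 * deriv h p₀ - p.1 ^ 2 / 2 * deriv (deriv h) p₀) - (h (p₀ + (-p.1)) - h p₀ - (-p.1) * deriv h p₀ - (-p.1) ^ 2 / 2 * deriv (deriv h) p₀)) - (h (p₀ + p.1) - h (p₀ + -(μ p.1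 p.2))) * ((U (w₀ + p.2) - U w₀ - p.2 * deriv U w₀ - p.2 ^ 2 / 2 * deriv (deriv U) w₀) / p.2) - (h (p₀ + -(μ p.1 p.2)) - h (p₀ + -p.1)) * ((U (w₀ + (-p.2)) - U w₀ - (-p.2) * deriv U w₀ - (-p.2) ^ 2 / 2 * deriv (deriv U) w₀) / p.2)|)) =o[l] fun p : ℝ × ℝ => p.1 := by
    have w1 : (fun p : ℝ × ℝ => (p.1 * p.2 * deriv h p₀ * deriv (deriv U) w₀)) =o[l] fun p : ℝ × ℝ => p.1 :=
      (o12.const_mul_left (deriv h p₀ * deriv (deriv U) w₀)).congr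
        (fun p => by ring) (fun p => rfl)
    have w2 : (fun p : ℝ × ℝ => (p.1 ^ 2 * deriv U w₀ * deriv (deriv h) p₀)) =o[l] fun p : ℝ × ℝ => p.1 :=
      (o11.const_mul_left (deriv U w₀ * deriv (deriv h) p₀)).congr
        (fun p => by ring) (fun p => rfl)
    have w1' := (w1.abs_left.const_mul_left (2 / (2 * deriv h p₀ * deriv U w₀)))
    have w2' := (w2.abs_left.const_mul_left (2 / (2 * deriv h p₀ * deriv U w₀)))
    have w3' := (hF1o.abs_left.const_mul_left (2 / (2 * deriv h p₀ * deriv U w₀)))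
    exact (w1'.add w2').add w3'
  have hν1 : (fun p : ℝ × ℝ => μ p.1 p.2) =o[l] fun p : ℝ × ℝ => p.1 := by
    refine IsBigO.trans_isLittleO ?_ hWo
    rw [isBigO_iff]
    refine ⟨1, ?_⟩
    filter_upwards [hWbd] with p hp
    rw [one_mul, Real.norm_eq_abs, Real.norm_eq_abs]
    exact hp.trans (le_abs_self _)
  have hν1O : (fun p : ℝ × ℝ => μ p.1 p.2) =O[l] fun p : ℝ × ℝ => p.1 := hν1.isBigO
  have hν2 : (fun p : ℝ × ℝ => (μ p.1 p.2) ^ 2) =o[l] fun p : ℝ × ℝ => p.1 ^ 2 := by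
    have := hν1.mul_isBigO hν1O
    exact this.congr (fun p => by ring) (fun p => by ring)
  have hRHS : (fun p : ℝ × ℝ =>
      (1 / (2 * deriv h p₀ * deriv U w₀)) * (2 * deriv h p₀ * deriv U w₀ * (μ p.1 p.2) + p.1 * p.2 * deriv h p₀ * deriv (deriv U) w₀ + p.1 ^ 2 * deriv U w₀ * deriv (deriv h) p₀ - deriv U w₀ * deriv (deriv h) p₀ * (μ p.1 p.2) ^ 2)
        + (deriv (deriv h) p₀ / (2 * deriv h p₀)) * (μ p.1 p.2) ^ 2) =o[l] (fun p : ℝ × ℝ => p.1 * p.2 + p.1 ^ 2) :=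
    (hmain.const_mul_left (1 / (2 * deriv h p₀ * deriv U w₀))).add
      ((hν2.trans_isBigO hE1).const_mul_left (deriv (deriv h) p₀ / (2 * deriv h p₀)))
  refine hRHS.congr' (Filter.Eventually.of_forall fun p => ?_) (EventuallyEq.refl _ _)
  field_simp
  ring
end

section
/- Let U₁, U₂ : ℝ → ℝ be twice continuously differentiable with U₁' > 0, U₂' > 0, and suppose −U₂''(x)/U₂'(x) ≥ −U₁''(x)/U₁'(x) for all x. Then for all w < x: U₂'(x)/U₂'(w) ≤ U₁'(x)/U₁'(w), and for all w > x: U₂'(x)/U₂'(w) ≥ U₁'(x)/U₁'(w). -/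
theorem stmt_11 (U₁ U₂ : ℝ → ℝ)
    (hC2₁ : ContDiff ℝ 2 U₁) (hC2₂ : ContDiff ℝ 2 U₂)
    (hU₁' : ∀ x, 0 < deriv U₁ x) (hU₂' : ∀ x, 0 < deriv U₂ x)
    (hcomp : ∀ x, -(deriv (deriv U₁) x) / deriv U₁ x
      ≤ -(deriv (deriv U₂) x) / deriv U₂ x) :
    (∀ w x : ℝ, w < x → deriv U₂ x / deriv U₂ w ≤ deriv U₁ x / deriv U₁ w) ∧
    (∀ w x : ℝ, x < w → deriv U₁ x / deriv U₁ w ≤ deriv U₂ x / deriv U₂ w) := by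
  have hd₁ : Differentiable ℝ (deriv U₁) := by
    have h2 : ContDiff ℝ ((1:ℕ)+1) U₁ := by exact_mod_cast hC2₁
    exact (contDiff_succ_iff_deriv.mp h2).2.2.differentiable (by norm_num)
  have hd₂ : Differentiable ℝ (deriv U₂) := by
    have h2 : ContDiff ℝ ((1:ℕ)+1) U₂ := by exact_mod_cast hC2₂
    exact (contDiff_succ_iff_deriv.mp h2).2.2.differentiable (by norm_num)
  set g : ℝ → ℝ := fun x => Real.log (deriv U₂ x) - Real.log (deriv U₁ x) with hg
  have hgd : ∀ x, HasDerivAt g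
      (deriv (deriv U₂) x / deriv U₂ x - deriv (deriv U₁) x / deriv U₁ x) x := by
    intro x
    exact (((hd₂ x).hasDerivAt.log (hU₂' x).ne').sub
      ((hd₁ x).hasDerivAt.log (hU₁' x).ne'))
  have hanti : Antitone g := by
    apply antitone_of_deriv_nonpos
    · exact fun x => (hgd x).differentiableAt
    · intro x
      rw [(hgd x).deriv]
      have h := hcomp x
      have h1 : deriv (deriv U₂) x / deriv U₂ x ≤ deriv (deriv U₁) x / deriv U₁ x := by
        have := neg_le_neg h
        simpa [neg_div] using this
      linarith
  have key : ∀ w x : ℝ, w ≤ x →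
      deriv U₂ x / deriv U₂ w ≤ deriv U₁ x / deriv U₁ w := by
    intro w x hwx
    have hgle : g x ≤ g w := hanti hwx
    rw [div_le_div_iff₀ (hU₂' w) (hU₁' w)]
    have : Real.log (deriv U₂ x * deriv U₁ w) ≤ Real.log (deriv U₁ x * deriv U₂ w) := by
      rw [Real.log_mul (hU₂' x).ne' (hU₁' w).ne', Real.log_mul (hU₁' x).ne' (hU₂' w).ne']
      simp only [hg] at hgle
      linarith
    exact (Real.log_le_log_iff (mul_pos (hU₂' x) (hU₁' w)) (mul_pos (hU₁' x) (hU₂' w))).mp this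
  constructor
  · exact fun w x hwx => key w x hwx.le
  · intro w x hxw
    have h := key x w hxw.le
    rw [div_le_div_iff₀ (hU₁' w) (hU₂' w)]
    rw [div_le_div_iff₀ (hU₂' x) (hU₁' x)] at h
    linarith
end

section
/- Let U₁, U₂ : ℝ → ℝ be twice continuously differentiable with U₁' > 0, U₂' > 0. Then −U₂''(x)/U₂'(x) ≥ −U₁''(x)/U₁'(x) for all x if and only if for all v < w ≤ x < y: (U₂(y)−U₂(x))/(U₂(w)−U₂(v)) ≤ (U₁(y)−U₁(x))/(U₁(w)−U₁(v)). -/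
open Set

private lemma cauchy_slope (U₁ U₂ : ℝ → ℝ)
    (h1 : Differentiable ℝ U₁) (h2 : Differentiable ℝ U₂)
    (hU₁' : ∀ x, 0 < deriv U₁ x) {a b : ℝ} (hab : a < b) :
    ∃ c ∈ Set.Ioo a b,
      U₂ b - U₂ a = (deriv U₂ c / deriv U₁ c) * (U₁ b - U₁ a) := by
  obtain ⟨c, hc, heq⟩ := exists_ratio_deriv_eq_ratio_slope U₁ hab
    h1.continuous.continuousOn (fun x _ => (h1 x).differentiableWithinAt)
    U₂ h2.continuous.continuousOn (fun x _ => (h2 x).differentiableWithinAt)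
  refine ⟨c, hc, ?_⟩
  have hne : deriv U₁ c ≠ 0 := (hU₁' c).ne'
  field_simp
  linarith [heq]

theorem stmt_12 (U₁ U₂ : ℝ → ℝ)
    (hC2₁ : ContDiff ℝ 2 U₁) (hC2₂ : ContDiff ℝ 2 U₂)
    (hU₁' : ∀ x, 0 < deriv U₁ x) (hU₂' : ∀ x, 0 < deriv U₂ x) :
    (∀ x, -(deriv (deriv U₁) x) / deriv U₁ x
        ≤ -(deriv (deriv U₂) x) / deriv U₂ x) ↔
    (∀ v w x y : ℝ, v < w → w ≤ x → x < y →
      (U₂ y - U₂ x) / (U₂ w - U₂ v) ≤ (U₁ y - U₁ x) / (U₁ w - U₁ v)) := by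
  have hd₁ : Differentiable ℝ U₁ := hC2₁.differentiable (by norm_num)
  have hd₂ : Differentiable ℝ U₂ := hC2₂.differentiable (by norm_num)
  have hc₁' : ContDiff ℝ 1 (deriv U₁) := by
    have h := hC2₁; rw [(by norm_num : (2 : WithTop ℕ∞) = 1 + 1)] at h
    exact (contDiff_succ_iff_deriv.mp h).2.2
  have hc₂' : ContDiff ℝ 1 (deriv U₂) := by
    have h := hC2₂; rw [(by norm_num : (2 : WithTop ℕ∞) = 1 + 1)] at h
    exact (contDiff_succ_iff_deriv.mp h).2.2
  have hd₁' : Differentiable ℝ (deriv U₁) := hc₁'.differentiable one_ne_zero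
  have hd₂' : Differentiable ℝ (deriv U₂) := hc₂'.differentiable one_ne_zero
  set r : ℝ → ℝ := fun x => deriv U₂ x / deriv U₁ x with hr
  have hrd : Differentiable ℝ r :=
    hd₂'.div hd₁' fun x => (hU₁' x).ne'
  have hrderiv : ∀ x, deriv r x =
      (deriv (deriv U₂) x * deriv U₁ x - deriv U₂ x * deriv (deriv U₁) x)
        / (deriv U₁ x) ^ 2 := fun x =>
    deriv_div (hd₂' x) (hd₁' x) (hU₁' x).ne'
  have hmono₁ : StrictMono U₁ := strictMono_of_deriv_pos hU₁'
  have hmono₂ : StrictMono U₂ := strictMono_of_deriv_pos hU₂'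
  constructor
  · intro hA v w x y hvw hwx hxy
    -- r is antitone
    have hanti : Antitone r := by
      apply antitone_of_deriv_nonpos hrd
      intro z
      rw [hrderiv z]
      apply div_nonpos_of_nonpos_of_nonneg _ (sq_nonneg _)
      have h := hA z
      have h1 := hU₁' z
      have h2 := hU₂' z
      rw [div_le_div_iff₀ h1 h2] at h
      nlinarith
    obtain ⟨c₁, hc₁, he₁⟩ := cauchy_slope U₁ U₂ hd₁ hd₂ hU₁' hvw
    obtain ⟨c₂, hc₂, he₂⟩ := cauchy_slope U₁ U₂ hd₁ hd₂ hU₁' hxy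
    have hS₁ : 0 < U₁ w - U₁ v := sub_pos.mpr (hmono₁ hvw)
    have hS₂ : 0 < U₁ y - U₁ x := sub_pos.mpr (hmono₁ hxy)
    have hT₁ : 0 < U₂ w - U₂ v := sub_pos.mpr (hmono₂ hvw)
    have hrc : r c₂ ≤ r c₁ := hanti (le_trans hc₁.2.le (le_trans hwx hc₂.1.le))
    rw [div_le_div_iff₀ hT₁ hS₁, he₁, he₂]
    have hr₁pos : 0 < r c₁ := div_pos (hU₂' c₁) (hU₁' c₁)
    have e1 : deriv U₂ c₁ / deriv U₁ c₁ = r c₁ := rfl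
    have e2 : deriv U₂ c₂ / deriv U₁ c₂ = r c₂ := rfl
    rw [e1, e2]
    nlinarith [mul_pos hS₂ hS₁]
  · intro hI z
    by_contra hcon
    push_neg at hcon
    have hzpos : 0 < deriv r z := by
      rw [hrderiv z]
      apply div_pos _ (pow_pos (hU₁' z) 2)
      have h1 := hU₁' z
      have h2 := hU₂' z
      rw [div_lt_div_iff₀ h2 h1] at hcon
      nlinarith
    have hcont : Continuous (deriv r) := by
      have h1r : ContDiff ℝ 1 r := hc₂'.div hc₁' fun x => (hU₁' x).ne'
      exact h1r.continuous_deriv le_rfl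
    obtain ⟨δ, hδpos, hball⟩ := Metric.mem_nhds_iff.mp
      (hcont.continuousAt.preimage_mem_nhds (Ioi_mem_nhds hzpos))
    have hrpos : ∀ t ∈ Set.Ioo (z - δ) (z + δ), 0 < deriv r t := by
      intro t ht
      have : t ∈ Metric.ball z δ := by
        rw [Metric.mem_ball, Real.dist_eq, abs_lt]
        constructor <;> [linarith [ht.1]; linarith [ht.2]]
      exact hball this
    have hsm : StrictMonoOn r (Set.Ioo (z - δ) (z + δ)) := by
      apply strictMonoOn_of_deriv_pos (convex_Ioo _ _) hrd.continuous.continuousOn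
      intro t ht
      rw [interior_Ioo] at ht
      exact hrpos t ht
    have hv : z - δ / 2 < z := by linarith
    have hy : z < z + δ / 2 := by linarith
    obtain ⟨c₁, hc₁, he₁⟩ := cauchy_slope U₁ U₂ hd₁ hd₂ hU₁' hv
    obtain ⟨c₂, hc₂, he₂⟩ := cauchy_slope U₁ U₂ hd₁ hd₂ hU₁' hy
    have hc₁m : c₁ ∈ Set.Ioo (z - δ) (z + δ) :=
      ⟨by linarith [hc₁.1], by linarith [hc₁.2]⟩
    have hc₂m : c₂ ∈ Set.Ioo (z - δ) (z + δ) :=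
      ⟨by linarith [hc₂.1], by linarith [hc₂.2]⟩
    have hlt : r c₁ < r c₂ := hsm hc₁m hc₂m (lt_trans hc₁.2 hc₂.1)
    have hII := hI (z - δ / 2) z z (z + δ / 2) hv le_rfl hy
    have hS₁ : 0 < U₁ z - U₁ (z - δ / 2) := sub_pos.mpr (hmono₁ hv)
    have hS₂ : 0 < U₁ (z + δ / 2) - U₁ z := sub_pos.mpr (hmono₁ hy)
    have hT₁ : 0 < U₂ z - U₂ (z - δ / 2) := sub_pos.mpr (hmono₂ hv)
    rw [div_le_div_iff₀ hT₁ hS₁, he₁, he₂] at hII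
    have hr₂pos : 0 < r c₂ := div_pos (hU₂' c₂) (hU₁' c₂)
    have e1 : deriv U₂ c₁ / deriv U₁ c₁ = r c₁ := rfl
    have e2 : deriv U₂ c₂ / deriv U₁ c₂ = r c₂ := rfl
    rw [e1, e2] at hII
    nlinarith [mul_pos hS₂ hS₁]
end

section
/- Let U₁, U₂ be twice continuously differentiable with U₁', U₂' > 0. Then −U₂''(x)/U₂'(x) ≥ −U₁''(x)/U₁'(x) for all x if and only if there exists a twice differentiable function φ with φ' > 0 and φ'' ≤ 0 on the range of U₁ such that U₂ = φ ∘ U₁. -/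
open Filter Set
open scoped Topology

theorem stmt_14 (U₁ U₂ : ℝ → ℝ)
    (hC2₁ : ContDiff ℝ 2 U₁) (hC2₂ : ContDiff ℝ 2 U₂)
    (hU₁' : ∀ x, 0 < deriv U₁ x) (hU₂' : ∀ x, 0 < deriv U₂ x) :
    (∀ x, -(deriv (deriv U₁) x) / deriv U₁ x
        ≤ -(deriv (deriv U₂) x) / deriv U₂ x) ↔
    (∃ φ : ℝ → ℝ,
      (∀ y ∈ Set.range U₁,
        DifferentiableAt ℝ φ y ∧ DifferentiableAt ℝ (deriv φ) y ∧
        0 < deriv φ y ∧ deriv (deriv φ) y ≤ 0) ∧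
      U₂ = φ ∘ U₁) := by
  -- basic facts
  have h2eq : (2 : WithTop ℕ∞) = 1 + 1 := by norm_num
  have hd₁ : ContDiff ℝ 1 (deriv U₁) := (contDiff_succ_iff_deriv.mp (h2eq ▸ hC2₁)).2.2
  have hd₂ : ContDiff ℝ 1 (deriv U₂) := (contDiff_succ_iff_deriv.mp (h2eq ▸ hC2₂)).2.2
  have hdiff₁ : Differentiable ℝ U₁ := (contDiff_succ_iff_deriv.mp (h2eq ▸ hC2₁)).1
  have hdiff₂ : Differentiable ℝ U₂ := (contDiff_succ_iff_deriv.mp (h2eq ▸ hC2₂)).1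
  have hdd₁ : Differentiable ℝ (deriv U₁) := hd₁.differentiable one_ne_zero
  have hdd₂ : Differentiable ℝ (deriv U₂) := hd₂.differentiable one_ne_zero
  have hs₁ : ∀ x, HasStrictDerivAt U₁ (deriv U₁ x) x := fun x =>
    hC2₁.contDiffAt.hasStrictDerivAt (by norm_num)
  have hs₂ : ∀ x, HasStrictDerivAt U₂ (deriv U₂ x) x := fun x =>
    hC2₂.contDiffAt.hasStrictDerivAt (by norm_num)
  have hinj : Function.Injective U₁ := (strictMono_of_deriv_pos hU₁').injective
  constructor
  · intro hAP
    set g := Function.invFun U₁ with hgdef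
    have hgl : ∀ x, g (U₁ x) = x := fun x => Function.leftInverse_invFun hinj x
    have hgs : ∀ x, HasStrictDerivAt g (deriv U₁ x)⁻¹ (U₁ x) := fun x =>
      (hs₁ x).to_local_left_inverse (ne_of_gt (hU₁' x)) (Eventually.of_forall hgl)
    have hopen : IsOpen (Set.range U₁) := by
      have : IsOpenMap U₁ :=
        isOpenMap_of_hasStrictDerivAt hs₁ (fun x => ne_of_gt (hU₁' x))
      simpa [Set.image_univ] using this.isOpen_range
    refine ⟨U₂ ∘ g, ?_, ?_⟩
    · rintro y ⟨x, rfl⟩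
      -- derivative of φ = U₂ ∘ g at U₁ x
      have hφd : HasStrictDerivAt (U₂ ∘ g) (deriv U₂ x * (deriv U₁ x)⁻¹) (U₁ x) := by
        have hx : HasStrictDerivAt U₂ (deriv U₂ x) (g (U₁ x)) := by
          rw [hgl x]; exact hs₂ x
        simpa [hgl x] using hx.comp (U₁ x) (hgs x)
      -- φ' agrees with F := fun y => deriv U₂ (g y) / deriv U₁ (g y) on range U₁
      have hF : ∀ z ∈ Set.range U₁, deriv (U₂ ∘ g) z = deriv U₂ (g z) / deriv U₁ (g z) := by
        rintro z ⟨w, rfl⟩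
        have h : HasStrictDerivAt (U₂ ∘ g) (deriv U₂ w * (deriv U₁ w)⁻¹) (U₁ w) := by
          have hx : HasStrictDerivAt U₂ (deriv U₂ w) (g (U₁ w)) := by
            rw [hgl w]; exact hs₂ w
          simpa [hgl w] using hx.comp (U₁ w) (hgs w)
        rw [h.hasDerivAt.deriv, hgl w, div_eq_mul_inv]
      have hmem : Set.range U₁ ∈ 𝓝 (U₁ x) := hopen.mem_nhds ⟨x, rfl⟩
      have hEq : deriv (U₂ ∘ g) =ᶠ[𝓝 (U₁ x)]
          fun z => deriv U₂ (g z) / deriv U₁ (g z) :=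
        eventually_of_mem hmem hF
      -- F is differentiable at U₁ x with nonpositive derivative
      have hga : HasDerivAt g (deriv U₁ x)⁻¹ (U₁ x) := (hgs x).hasDerivAt
      have hnum : HasDerivAt (fun z => deriv U₂ (g z))
          (deriv (deriv U₂) x * (deriv U₁ x)⁻¹) (U₁ x) := by
        simpa [hgl x, Function.comp_def] using (hdd₂ (g (U₁ x))).hasDerivAt.comp (U₁ x) hga
      have hden : HasDerivAt (fun z => deriv U₁ (g z))
          (deriv (deriv U₁) x * (deriv U₁ x)⁻¹) (U₁ x) := by
        simpa [hgl x, Function.comp_def] using (hdd₁ (g (U₁ x))).hasDerivAt.comp (U₁ x) hga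
      have hden0 : deriv U₁ (g (U₁ x)) ≠ 0 := by rw [hgl x]; exact ne_of_gt (hU₁' x)
      have hFd : HasDerivAt (fun z => deriv U₂ (g z) / deriv U₁ (g z))
          ((deriv (deriv U₂) x * (deriv U₁ x)⁻¹ * deriv U₁ (g (U₁ x)) -
            deriv U₂ (g (U₁ x)) * (deriv (deriv U₁) x * (deriv U₁ x)⁻¹)) /
            (deriv U₁ (g (U₁ x)))^2) (U₁ x) := hnum.div hden hden0
      have hφ'd : DifferentiableAt ℝ (deriv (U₂ ∘ g)) (U₁ x) :=
        (hFd.differentiableAt).congr_of_eventuallyEq hEq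
      refine ⟨hφd.hasDerivAt.differentiableAt, hφ'd, ?_, ?_⟩
      · rw [hφd.hasDerivAt.deriv]
        exact mul_pos (hU₂' x) (inv_pos.mpr (hU₁' x))
      · have : deriv (deriv (U₂ ∘ g)) (U₁ x) = deriv
            (fun z => deriv U₂ (g z) / deriv U₁ (g z)) (U₁ x) := hEq.deriv_eq
        rw [this, hFd.deriv, hgl x]
        -- sign computation
        have h1 := hU₁' x
        have h2 := hU₂' x
        have hAPx := hAP x
        rw [div_le_div_iff₀ h1 h2] at hAPx
        apply div_nonpos_of_nonpos_of_nonneg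
        · nlinarith [inv_pos.mpr h1]
        · positivity
    · funext x
      simp [Function.comp, hgl x]
  · rintro ⟨φ, hφ, rfl⟩ x
    obtain ⟨hφ1, hφ2, hφ3, hφ4⟩ := hφ (U₁ x) ⟨x, rfl⟩
    -- first derivative of φ ∘ U₁
    have hc : ∀ z, HasDerivAt (φ ∘ U₁) (deriv φ (U₁ z) * deriv U₁ z) z := fun z =>
      ((hφ (U₁ z) ⟨z, rfl⟩).1.hasDerivAt).comp z (hdiff₁ z).hasDerivAt
    have hderiv1 : deriv (φ ∘ U₁) = fun z => deriv φ (U₁ z) * deriv U₁ z := by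
      funext z; exact (hc z).deriv
    -- second derivative
    have hprod : HasDerivAt (fun z => deriv φ (U₁ z) * deriv U₁ z)
        ((deriv (deriv φ) (U₁ x) * deriv U₁ x) * deriv U₁ x +
          deriv φ (U₁ x) * deriv (deriv U₁) x) x :=
      (hφ2.hasDerivAt.comp x (hdiff₁ x).hasDerivAt).mul (hdd₁ x).hasDerivAt
    have h2nd : deriv (deriv (φ ∘ U₁)) x =
        deriv (deriv φ) (U₁ x) * deriv U₁ x * deriv U₁ x +
          deriv φ (U₁ x) * deriv (deriv U₁) x := by
      rw [hderiv1]; exact hprod.deriv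
    have h1st : deriv (φ ∘ U₁) x = deriv φ (U₁ x) * deriv U₁ x := (hc x).deriv
    rw [h2nd, h1st]
    have h1 := hU₁' x
    rw [div_le_div_iff₀ h1 (mul_pos hφ3 h1)]
    have hkey : deriv (deriv φ) (U₁ x) * (deriv U₁ x * deriv U₁ x * deriv U₁ x) ≤ 0 :=
      mul_nonpos_of_nonpos_of_nonneg hφ4 (by positivity)
    nlinarith [hkey]
end

section
/- Let h₁, h₂ : [0,1] → [0,1] be twice continuously differentiable, strictly increasing, with hᵢ(0)=0, hᵢ(1)=1 and hᵢ' > 0, and suppose −h₂''(p)/h₂'(p) ≥ −h₁''(p)/h₁'(p) for all p ∈ (0,1). Then for every p₀ ∈ (0,1) and every 0 < ε₁ ≤ min(p₀, 1−p₀), the premiums μᵢ defined by hᵢ(p₀−ε₁) − 2hᵢ(p₀−μᵢ) + hᵢ(p₀+ε₁) = 0 satisfy μ₂ ≥ μ₁. -/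
open Set

theorem stmt_17 (h₁ h₂ : ℝ → ℝ)
    (hC2₁ : ContDiff ℝ 2 h₁) (hC2₂ : ContDiff ℝ 2 h₂)
    (hmono₁ : StrictMonoOn h₁ (Icc 0 1)) (hmono₂ : StrictMonoOn h₂ (Icc 0 1))
    (hmaps₁ : MapsTo h₁ (Icc 0 1) (Icc 0 1)) (hmaps₂ : MapsTo h₂ (Icc 0 1) (Icc 0 1))
    (h₁0 : h₁ 0 = 0) (h₁1 : h₁ 1 = 1) (h₂0 : h₂ 0 = 0) (h₂1 : h₂ 1 = 1)
    (hd₁ : ∀ p ∈ Ioo (0:ℝ) 1, 0 < deriv h₁ p)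
    (hd₂ : ∀ p ∈ Ioo (0:ℝ) 1, 0 < deriv h₂ p)
    (hcomp : ∀ p ∈ Ioo (0:ℝ) 1,
      -(deriv (deriv h₁) p) / deriv h₁ p ≤ -(deriv (deriv h₂) p) / deriv h₂ p) :
    ∀ p₀ ∈ Ioo (0:ℝ) 1, ∀ ε₁ : ℝ, 0 < ε₁ → ε₁ ≤ min p₀ (1 - p₀) →
      ∀ μ₁ ∈ Icc (-ε₁) ε₁, ∀ μ₂ ∈ Icc (-ε₁) ε₁,
        h₁ (p₀ - ε₁) - 2 * h₁ (p₀ - μ₁) + h₁ (p₀ + ε₁) = 0 →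
        h₂ (p₀ - ε₁) - 2 * h₂ (p₀ - μ₂) + h₂ (p₀ + ε₁) = 0 →
        μ₁ ≤ μ₂ := by
  intro p₀ hp₀ ε₁ hε₁ hεle μ₁ hμ₁ μ₂ hμ₂ eq₁ eq₂
  have hdiff₁ : Differentiable ℝ h₁ := hC2₁.differentiable (by norm_num)
  have hdiff₂ : Differentiable ℝ h₂ := hC2₂.differentiable (by norm_num)
  have hdd₁ : Differentiable ℝ (deriv h₁) := by
    have h2 : ContDiff ℝ ((1:ℕ) + 1) h₁ := by exact_mod_cast hC2₁
    exact ((contDiff_succ_iff_deriv.mp h2).2.2).differentiable (by norm_num)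
  have hdd₂ : Differentiable ℝ (deriv h₂) := by
    have h2 : ContDiff ℝ ((1:ℕ) + 1) h₂ := by exact_mod_cast hC2₂
    exact ((contDiff_succ_iff_deriv.mp h2).2.2).differentiable (by norm_num)
  set a := p₀ - ε₁ with ha
  set b := p₀ + ε₁ with hb
  set x := p₀ - μ₂ with hx
  set y := p₀ - μ₁ with hy
  have ha0 : 0 ≤ a := by
    have := le_min_iff.mp hεle; linarith [this.1]
  have hb1 : b ≤ 1 := by
    have := le_min_iff.mp hεle; linarith [this.2]
  have hab : a < b := by simp [ha, hb]; linarith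
  have hxmem : x ∈ Icc a b := by
    constructor <;> [linarith [hμ₂.2]; linarith [hμ₂.1]]
  have hymem : y ∈ Icc a b := by
    constructor <;> [linarith [hμ₁.2]; linarith [hμ₁.1]]
  have haI : a ∈ Icc (0:ℝ) 1 := ⟨ha0, by linarith⟩
  have hbI : b ∈ Icc (0:ℝ) 1 := ⟨by linarith, hb1⟩
  have hxI : x ∈ Icc (0:ℝ) 1 := ⟨by linarith [hxmem.1], by linarith [hxmem.2]⟩
  have hyI : y ∈ Icc (0:ℝ) 1 := ⟨by linarith [hymem.1], by linarith [hymem.2]⟩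
  -- midpoint equations
  have heq₁ : 2 * h₁ y = h₁ a + h₁ b := by linarith
  have heq₂ : 2 * h₂ x = h₂ a + h₂ b := by linarith
  -- x < b
  have hxb : x < b := by
    rcases lt_or_eq_of_le hxmem.2 with h | h
    · exact h
    · exfalso
      have : h₂ a = h₂ b := by rw [h] at heq₂; linarith
      exact absurd this (ne_of_lt (hmono₂ haI hbI hab))
  -- key inequality: 2 * h₁ x ≤ h₁ a + h₁ b
  have key : 2 * h₁ x ≤ h₁ a + h₁ b := by
    rcases eq_or_lt_of_le hxmem.1 with h | hax
    · rw [← h]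
      have := (hmono₁ haI hbI hab).le
      linarith
    · -- x ∈ (a, b) ⊆ (0,1)
      have hxO : x ∈ Ioo (0:ℝ) 1 := ⟨by linarith, by linarith⟩
      -- r = deriv h₂ / deriv h₁ is antitone on Ioo 0 1
      set r : ℝ → ℝ := fun t => deriv h₂ t / deriv h₁ t with hr
      have hrant : AntitoneOn r (Ioo (0:ℝ) 1) := by
        have hconv : Convex ℝ (Ioo (0:ℝ) 1) := convex_Ioo 0 1
        apply AntitoneOn.mono (antitoneOn_of_deriv_nonpos hconv ?cont ?diff ?dle) le_rfl
        case cont =>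
          apply ContinuousOn.div (hdd₂.continuous.continuousOn) (hdd₁.continuous.continuousOn)
          intro t ht; exact (hd₁ t ht).ne'
        case diff =>
          rw [interior_Ioo]
          intro t ht
          exact ((hdd₂.differentiableAt).div (hdd₁.differentiableAt) (hd₁ t ht).ne').differentiableWithinAt
        case dle =>
          rw [interior_Ioo]
          intro t ht
          have hda : HasDerivAt (fun t => deriv h₂ t / deriv h₁ t)
              ((deriv (deriv h₂) t * deriv h₁ t - deriv h₂ t * deriv (deriv h₁) t) / (deriv h₁ t)^2) t :=
            ((hdd₂.differentiableAt).hasDerivAt).div ((hdd₁.differentiableAt).hasDerivAt) (hd₁ t ht).ne'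
          rw [hr, hda.deriv]
          apply div_nonpos_of_nonpos_of_nonneg _ (sq_nonneg _)
          have h1 := hd₁ t ht
          have h2 := hd₂ t ht
          have hc := hcomp t ht
          rw [div_le_div_iff₀ h1 h2] at hc
          nlinarith
      have hrx : 0 < r x := div_pos (hd₂ x hxO) (hd₁ x hxO)
      set c := r x with hc
      -- G = c * h₁ - h₂
      set G : ℝ → ℝ := fun t => c * h₁ t - h₂ t with hG
      have hGdiff : Differentiable ℝ G := (hdiff₁.const_mul c).sub hdiff₂
      have hGderiv : ∀ t, deriv G t = c * deriv h₁ t - deriv h₂ t := by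
        intro t
        rw [hG]
        rw [deriv_fun_sub ((hdiff₁ t).const_mul c) (hdiff₂ t), deriv_const_mul c (hdiff₁ t)]
      -- Claim 1: G x ≤ G b
      have claim1 : G x ≤ G b := by
        have : MonotoneOn G (Icc x b) := by
          apply monotoneOn_of_deriv_nonneg (convex_Icc x b) hGdiff.continuous.continuousOn
            (hGdiff.differentiableOn.mono interior_subset)
          intro t ht
          rw [interior_Icc] at ht
          have htO : t ∈ Ioo (0:ℝ) 1 := ⟨by linarith [ht.1], by linarith [ht.2]⟩
          have hrt : r t ≤ c := hrant hxO htO ht.1.le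
          have h1 := hd₁ t htO
          rw [hGderiv]
          rw [hr] at hrt
          rw [div_le_iff₀ h1] at hrt
          linarith
        exact this (left_mem_Icc.mpr hxb.le) (right_mem_Icc.mpr hxb.le) hxb.le
      -- Claim 2: G x ≤ G a
      have claim2 : G x ≤ G a := by
        have : AntitoneOn G (Icc a x) := by
          apply antitoneOn_of_deriv_nonpos (convex_Icc a x) hGdiff.continuous.continuousOn
            (hGdiff.differentiableOn.mono interior_subset)
          intro t ht
          rw [interior_Icc] at ht
          have htO : t ∈ Ioo (0:ℝ) 1 := ⟨by linarith [ht.1], by linarith [ht.2]⟩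
          have hrt : c ≤ r t := hrant htO hxO ht.2.le
          have h1 := hd₁ t htO
          rw [hGderiv]
          rw [hr] at hrt
          rw [le_div_iff₀ h1] at hrt
          linarith
        exact this (left_mem_Icc.mpr hax.le) (right_mem_Icc.mpr hax.le) hax.le
      -- combine: G a + G b ≥ 2 G x, and 2 h₂ x = h₂ a + h₂ b gives c*(2 h₁ x) ≤ c*(h₁ a + h₁ b)
      have : c * (2 * h₁ x) ≤ c * (h₁ a + h₁ b) := by
        simp only [hG] at claim1 claim2
        nlinarith
      exact le_of_mul_le_mul_left (by linarith) hrx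
  -- conclude: h₁ x ≤ h₁ y, so x ≤ y, so μ₁ ≤ μ₂
  have hxy : h₁ x ≤ h₁ y := by linarith
  by_contra hcon
  push_neg at hcon
  have : y < x := by simp [hx, hy]; linarith
  exact absurd (hmono₁ hyI hxI this) (not_lt.mpr hxy)
end
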